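/- arXiv:2306.00619 — 4 statements merged into one kernel-verified Lean document; each statement's English description precedes it below -/
import Mathlib

section
/- Consider the higher-order SIWS model. Then: (i) every solution with z(0) ∈ D̄ satisfies z(t) ∈ D̄ for all t ≥ 0; (ii) every solution with z(0) ∈ 𝐃 satisfies z(t) ∈ 𝐃 for all t ≥ 0; (iii) G(0) = 0, and if in addition B_f is irreducible, then every equilibrium belonging to D̄ but not to 𝐃 is equal to 0. -/
open Matrix Filter Topology MeasureTheory

noncomputable section

/-- `Z(z) = diag(z_1,…,z_n,0,…,0)`. -/
def Zmat (n : ℕ) {N : ℕ} (z : Fin N → ℝ) : Matrix (Fin N) (Fin N) ℝ :=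
  Matrix.diagonal fun i => if (i : ℕ) < n then z i else 0

/-- `H(z)_i = zᵀ B_{fi} z`. -/
def Hquad {N : ℕ} (Bfi : Fin N → Matrix (Fin N) (Fin N) ℝ) (z : Fin N → ℝ) : Fin N → ℝ :=
  fun i => z ⬝ᵥ (Bfi i).mulVec z

/-- The higher-order SIWS vector field `G(z) = -D_f z + (I - Z(z)) (B_f z + H(z))`. -/
def Gfield (n : ℕ) {N : ℕ} (Df Bf : Matrix (Fin N) (Fin N) ℝ)
    (Bfi : Fin N → Matrix (Fin N) (Fin N) ℝ) (z : Fin N → ℝ) : Fin N → ℝ :=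
  -(Df.mulVec z) + (1 - Zmat n z).mulVec (Bf.mulVec z + Hquad Bfi z)

/-- Upper bound vector: `1` on the first `n` coordinates, `w_{j,max}` on the rest. -/
def ubound (n : ℕ) {N : ℕ} (Df Bf : Matrix (Fin N) (Fin N) ℝ)
    (Bfi : Fin N → Matrix (Fin N) (Fin N) ℝ) (i : Fin N) : ℝ :=
  if (i : ℕ) < n then 1 else (∑ q, Bf i q + ∑ p, ∑ q, Bfi i p q) / Df i i

/-- The closed domain `D̄`. -/
def Dbar (n : ℕ) {N : ℕ} (Df Bf : Matrix (Fin N) (Fin N) ℝ)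
    (Bfi : Fin N → Matrix (Fin N) (Fin N) ℝ) : Set (Fin N → ℝ) :=
  {z | ∀ i, 0 ≤ z i ∧ z i ≤ ubound n Df Bf Bfi i}

/-- The open domain `𝐃`. -/
def Dint (n : ℕ) {N : ℕ} (Df Bf : Matrix (Fin N) (Fin N) ℝ)
    (Bfi : Fin N → Matrix (Fin N) (Fin N) ℝ) : Set (Fin N → ℝ) :=
  {z | ∀ i, 0 < z i ∧ z i < ubound n Df Bf Bfi i}

/-- A solution of `z' = G(z)` on `[0,∞)`. -/
def IsSolution {N : ℕ} (G : (Fin N → ℝ) → (Fin N → ℝ)) (z : ℝ → Fin N → ℝ) : Prop :=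
  ∀ t : ℝ, 0 ≤ t → HasDerivAt z (G (z t)) t

/-- Irreducibility of a (nonnegative) square matrix. -/
def Irred {N : ℕ} (M : Matrix (Fin N) (Fin N) ℝ) : Prop :=
  ∀ i j : Fin N, i ≠ j → ∃ (r : ℕ) (k : ℕ → Fin N),
    k 0 = i ∧ k r = j ∧ ∀ s, s < r → 0 < M (k s) (k (s + 1))

/-- Spectral radius: maximum modulus of the complex eigenvalues. -/
def specRad {N : ℕ} (M : Matrix (Fin N) (Fin N) ℝ) : ℝ :=
  sSup {r : ℝ | ∃ μ : ℂ, (M.map fun x : ℝ => (x : ℂ)).charpoly.IsRoot μ ∧ r = ‖μ‖}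

/-- Spectral abscissa: maximum real part of the complex eigenvalues. -/
def specAbs {N : ℕ} (M : Matrix (Fin N) (Fin N) ℝ) : ℝ :=
  sSup {r : ℝ | ∃ μ : ℂ, (M.map fun x : ℝ => (x : ℂ)).charpoly.IsRoot μ ∧ r = μ.re}

/-- A matrix is Hurwitz if every eigenvalue has negative real part. -/
def IsHurwitz {N : ℕ} (M : Matrix (Fin N) (Fin N) ℝ) : Prop :=
  ∀ μ : ℂ, (M.map fun x : ℝ => (x : ℂ)).charpoly.IsRoot μ → μ.re < 0

/-- Euclidean norm on `ℝ^N`. -/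
def eucNorm {N : ℕ} (v : Fin N → ℝ) : ℝ := Real.sqrt (∑ i, v i ^ 2)

/-- Euclidean norm on a pair of vectors (concatenation). -/
def eucNorm2 {N : ℕ} (v w : Fin N → ℝ) : ℝ := Real.sqrt (∑ i, v i ^ 2 + ∑ i, w i ^ 2)

/-- Jacobian matrix of a vector field at a point. -/
def jacobian {N : ℕ} (G : (Fin N → ℝ) → (Fin N → ℝ)) (z : Fin N → ℝ) :
    Matrix (Fin N) (Fin N) ℝ :=
  Matrix.of fun i j => fderiv ℝ G z (Pi.single j 1) i

/-- Structural hypotheses of the higher-order SIWS model. -/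
structure ModelHyp (n : ℕ) {N : ℕ} (Df Bf : Matrix (Fin N) (Fin N) ℝ)
    (Bfi : Fin N → Matrix (Fin N) (Fin N) ℝ) : Prop where
  dDiag : ∀ i j, i ≠ j → Df i j = 0
  dPos : ∀ i, 0 < Df i i
  bNonneg : ∀ p q, 0 ≤ Bf p q
  bBlock : ∀ p q : Fin N, n ≤ (p : ℕ) → n ≤ (q : ℕ) → Bf p q = 0
  bfiNonneg : ∀ i p q, 0 ≤ Bfi i p q
  bfiBlock1 : ∀ i : Fin N, (i : ℕ) < n → ∀ p q : Fin N, n ≤ (p : ℕ) → n ≤ (q : ℕ) →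
    Bfi i p q = 0
  bfiBlock2 : ∀ i : Fin N, n ≤ (i : ℕ) → ∀ p q : Fin N, ¬((p : ℕ) < n ∧ (q : ℕ) < n) →
    Bfi i p q = 0

/-- Bi-virus vector field for one virus:
`G^ν(z, zo) = -D_f^ν z + (I - Z(z) - Z(zo)) (B_f^ν z + H^ν(z))`. -/
def GBi (n : ℕ) {N : ℕ} (Df Bf : Matrix (Fin N) (Fin N) ℝ)
    (Bfi : Fin N → Matrix (Fin N) (Fin N) ℝ) (z zo : Fin N → ℝ) : Fin N → ℝ :=
  -(Df.mulVec z) + (1 - Zmat n z - Zmat n zo).mulVec (Bf.mulVec z + Hquad Bfi z)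

/-- A solution of the bi-virus dynamics on `[0,∞)`. -/
def IsSolutionBi (n : ℕ) {N : ℕ} (Df1 Bf1 : Matrix (Fin N) (Fin N) ℝ)
    (Bfi1 : Fin N → Matrix (Fin N) (Fin N) ℝ) (Df2 Bf2 : Matrix (Fin N) (Fin N) ℝ)
    (Bfi2 : Fin N → Matrix (Fin N) (Fin N) ℝ) (z1 z2 : ℝ → Fin N → ℝ) : Prop :=
  ∀ t : ℝ, 0 ≤ t →
    HasDerivAt z1 (GBi n Df1 Bf1 Bfi1 (z1 t) (z2 t)) t ∧
    HasDerivAt z2 (GBi n Df2 Bf2 Bfi2 (z2 t) (z1 t)) t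

/-- Membership in the bi-virus domain `D̄_bi`. -/
def InDbarBi (n : ℕ) {N : ℕ} (Df1 Bf1 : Matrix (Fin N) (Fin N) ℝ)
    (Bfi1 : Fin N → Matrix (Fin N) (Fin N) ℝ) (Df2 Bf2 : Matrix (Fin N) (Fin N) ℝ)
    (Bfi2 : Fin N → Matrix (Fin N) (Fin N) ℝ) (z1 z2 : Fin N → ℝ) : Prop :=
  z1 ∈ Dbar n Df1 Bf1 Bfi1 ∧ z2 ∈ Dbar n Df2 Bf2 Bfi2 ∧
    ∀ i : Fin N, (i : ℕ) < n → z1 i + z2 i ≤ 1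

/-- The vector `𝟙` : first `n` coordinates equal `1`, the rest `0`. -/
def onevec (n : ℕ) {N : ℕ} : Fin N → ℝ := fun i => if (i : ℕ) < n then 1 else 0

/-- The general SIWS vector field. -/
def Ggen (n : ℕ) {N : ℕ} (Df : Matrix (Fin N) (Fin N) ℝ)
    (F H : (Fin N → ℝ) → (Fin N → ℝ)) (z : Fin N → ℝ) : Fin N → ℝ := fun i =>
  if (i : ℕ) < n then -(Df i i * z i) + (1 - z i) * (F z i + H z i)
  else -(Df i i * z i) + (F z i + H z i)

/-- Upper bound vector for the general SIWS model. -/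
def uboundGen (n : ℕ) {N : ℕ} (Df : Matrix (Fin N) (Fin N) ℝ)
    (F H : (Fin N → ℝ) → (Fin N → ℝ)) (i : Fin N) : ℝ :=
  if (i : ℕ) < n then 1 else (F (onevec n) i + H (onevec n) i) / Df i i

def DbarGen (n : ℕ) {N : ℕ} (Df : Matrix (Fin N) (Fin N) ℝ)
    (F H : (Fin N → ℝ) → (Fin N → ℝ)) : Set (Fin N → ℝ) :=
  {z | ∀ i, 0 ≤ z i ∧ z i ≤ uboundGen n Df F H i}

def DintGen (n : ℕ) {N : ℕ} (Df : Matrix (Fin N) (Fin N) ℝ)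
    (F H : (Fin N → ℝ) → (Fin N → ℝ)) : Set (Fin N → ℝ) :=
  {z | ∀ i, 0 < z i ∧ z i < uboundGen n Df F H i}

/-- Structural hypotheses of the general SIWS model. -/
structure GenHyp (n : ℕ) {N : ℕ} (Df : Matrix (Fin N) (Fin N) ℝ)
    (F H : (Fin N → ℝ) → (Fin N → ℝ)) : Prop where
  dDiag : ∀ i j, i ≠ j → Df i j = 0
  dPos : ∀ i, 0 < Df i i
  fSmooth : ContDiff ℝ 1 F
  hSmooth : ContDiff ℝ 1 H
  fZero : F 0 = 0
  hZero : H 0 = 0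
  fDep : ∀ i : Fin N, n ≤ (i : ℕ) → ∀ z z' : Fin N → ℝ,
    (∀ j : Fin N, (j : ℕ) < n → z j = z' j) → F z i = F z' i
  hDep : ∀ i : Fin N, n ≤ (i : ℕ) → ∀ z z' : Fin N → ℝ,
    (∀ j : Fin N, (j : ℕ) < n → z j = z' j) → H z i = H z' i
  fMono : ∀ (z : Fin N → ℝ) (i j : Fin N), 0 ≤ fderiv ℝ F z (Pi.single j 1) i
  hMono : ∀ (z : Fin N → ℝ) (i j : Fin N), 0 ≤ fderiv ℝ H z (Pi.single j 1) i
  hJacZero : fderiv ℝ H 0 = 0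
  edgeHyp : ∃ E : Set (Fin N × Fin N),
    (∀ e ∈ E, e.1 ≠ e.2) ∧
    (∀ i j : Fin N, i ≠ j → ∃ (r : ℕ) (k : ℕ → Fin N),
      k 0 = i ∧ k r = j ∧ ∀ s, s < r → (k s, k (s + 1)) ∈ E) ∧
    (∀ (z : Fin N → ℝ), ∀ e ∈ E, 0 < fderiv ℝ F z (Pi.single e.2 1) e.1)

/-- The perturbed SIWS vector field `G_ε(z) = -D_f z + (I - Z(z)) (B_f z + ε H(z))`. -/
def Gpert (n : ℕ) {N : ℕ} (Df Bf : Matrix (Fin N) (Fin N) ℝ)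
    (H : (Fin N → ℝ) → (Fin N → ℝ)) (ε : ℝ) (z : Fin N → ℝ) : Fin N → ℝ :=
  -(Df.mulVec z) + (1 - Zmat n z).mulVec (Bf.mulVec z + ε • H z)

namespace SIWSAux


lemma max_sq_hasDerivAt (x : ℝ) : HasDerivAt (fun y : ℝ => max 0 y ^ 2) (2 * max 0 x) x := by
  rcases lt_trichotomy x 0 with hx | hx | hx
  · have h1 : HasDerivAt (fun _ : ℝ => (0:ℝ)) 0 x := hasDerivAt_const x 0
    have h2 : (fun y : ℝ => max 0 y ^ 2) =ᶠ[𝓝 x] fun _ => (0:ℝ) := by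
      filter_upwards [eventually_lt_nhds hx] with y hy
      simp [max_eq_left hy.le]
    simpa [max_eq_left hx.le] using h1.congr_of_eventuallyEq h2
  · subst hx
    rw [hasDerivAt_iff_isLittleO]
    rw [Asymptotics.isLittleO_iff]
    intro c hc
    filter_upwards [eventually_abs_sub_lt 0 hc] with y hy
    have hy' : |y| < c := by simpa using hy
    have h0 : max 0 y ≤ |y| := max_le (abs_nonneg y) (le_abs_self y)
    have h1 : 0 ≤ max 0 y := le_max_left _ _
    have hsq : max 0 y ^ 2 ≤ c * |y| := by
      nlinarith [mul_nonneg (abs_nonneg y) (sub_pos.2 hy').le,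
        mul_nonneg (sub_nonneg.2 h0) (add_nonneg (abs_nonneg y) h1)]
    have heq : max 0 y ^ 2 - max 0 (0:ℝ) ^ 2 - (y - 0) • (2 * max 0 (0:ℝ)) = max 0 y ^ 2 := by
      simp
    rw [Real.norm_eq_abs, Real.norm_eq_abs, heq, abs_of_nonneg (by positivity), sub_zero]
    exact hsq
  · have h1 : HasDerivAt (fun y : ℝ => y ^ 2) (2 * x) x := by simpa using hasDerivAt_pow 2 x
    have h2 : (fun y : ℝ => max 0 y ^ 2) =ᶠ[𝓝 x] fun y => y ^ 2 := by
      filter_upwards [eventually_gt_nhds hx] with y hy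
      simp [max_eq_right hy.le]
    simpa [max_eq_right hx.le] using h1.congr_of_eventuallyEq h2


lemma mulVec_eq_sum {N : ℕ} (A : Matrix (Fin N) (Fin N) ℝ) (z : Fin N → ℝ) (i : Fin N) :
    A.mulVec z i = ∑ j, A i j * z j := rfl

lemma Hquad_eq_sum {N : ℕ} (Bfi : Fin N → Matrix (Fin N) (Fin N) ℝ) (z : Fin N → ℝ) (i : Fin N) :
    Hquad Bfi z i = ∑ p, ∑ q, z p * (Bfi i p q * z q) := by
  unfold Hquad
  rw [dotProduct]
  exact Finset.sum_congr rfl fun p _ => by rw [mulVec_eq_sum, Finset.mul_sum]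

lemma Gfield_apply {n N : ℕ} (Df Bf : Matrix (Fin N) (Fin N) ℝ)
    (Bfi : Fin N → Matrix (Fin N) (Fin N) ℝ) (hD : ∀ i j, i ≠ j → Df i j = 0)
    (z : Fin N → ℝ) (i : Fin N) :
    Gfield n Df Bf Bfi z i =
      -(Df i i * z i) + (1 - (if (i : ℕ) < n then z i else 0)) *
        (Bf.mulVec z i + Hquad Bfi z i) := by
  have hDf : Df.mulVec z i = Df i i * z i := by
    rw [mulVec_eq_sum]
    exact Finset.sum_eq_single_of_mem i (Finset.mem_univ i)
      (fun j _ hj => by rw [hD i j (Ne.symm hj), zero_mul])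
  have hZ : (1 - Zmat n z) =
      Matrix.diagonal (fun j : Fin N => 1 - (if (j : ℕ) < n then z j else 0)) := by
    rw [← Matrix.diagonal_one, Zmat, Matrix.diagonal_sub]
  simp only [Gfield, Pi.add_apply, Pi.neg_apply, hDf, hZ, Matrix.mulVec_diagonal]

lemma ubound_nonneg {n N : ℕ} {Df Bf : Matrix (Fin N) (Fin N) ℝ}
    {Bfi : Fin N → Matrix (Fin N) (Fin N) ℝ} (hmod : ModelHyp n Df Bf Bfi) (i : Fin N) :
    0 ≤ ubound n Df Bf Bfi i := by
  unfold ubound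
  split
  · norm_num
  · apply div_nonneg _ (hmod.dPos i).le
    exact add_nonneg (Finset.sum_nonneg fun q _ => hmod.bNonneg i q)
      (Finset.sum_nonneg fun p _ => Finset.sum_nonneg fun q _ => hmod.bfiNonneg i p q)

lemma hv_nonneg {n N : ℕ} {Df Bf : Matrix (Fin N) (Fin N) ℝ}
    {Bfi : Fin N → Matrix (Fin N) (Fin N) ℝ} (hmod : ModelHyp n Df Bf Bfi)
    {z : Fin N → ℝ} (hz : ∀ j, 0 ≤ z j) (i : Fin N) :
    0 ≤ Bf.mulVec z i ∧ 0 ≤ Hquad Bfi z i := by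
  constructor
  · rw [mulVec_eq_sum]
    exact Finset.sum_nonneg fun j _ => mul_nonneg (hmod.bNonneg i j) (hz j)
  · rw [Hquad_eq_sum]
    exact Finset.sum_nonneg fun p _ => Finset.sum_nonneg fun q _ =>
      mul_nonneg (hz p) (mul_nonneg (hmod.bfiNonneg i p q) (hz q))

/-- On `D̄`, for a water index `i ≥ n`, the infection pressure is at most `d_i w_{i,max}`. -/
lemma hv_le_w {n N : ℕ} {Df Bf : Matrix (Fin N) (Fin N) ℝ}
    {Bfi : Fin N → Matrix (Fin N) (Fin N) ℝ} (hmod : ModelHyp n Df Bf Bfi)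
    {z : Fin N → ℝ} (hz : ∀ j, 0 ≤ z j ∧ z j ≤ ubound n Df Bf Bfi j)
    {i : Fin N} (hi : n ≤ (i : ℕ)) :
    Bf.mulVec z i + Hquad Bfi z i ≤ Df i i * ubound n Df Bf Bfi i := by
  have hub : Df i i * ubound n Df Bf Bfi i = (∑ q, Bf i q) + ∑ p, ∑ q, Bfi i p q := by
    unfold ubound
    rw [if_neg (not_lt.2 hi), mul_comm]
    exact div_mul_cancel₀ _ (ne_of_gt (hmod.dPos i))
  rw [hub]
  have hz1 : ∀ j : Fin N, (j : ℕ) < n → z j ≤ 1 := by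
    intro j hj
    have := (hz j).2
    unfold ubound at this
    rwa [if_pos hj] at this
  apply add_le_add
  · rw [mulVec_eq_sum]
    apply Finset.sum_le_sum
    intro j _
    by_cases hj : (j : ℕ) < n
    · nlinarith [hmod.bNonneg i j, (hz j).1, hz1 j hj]
    · rw [hmod.bBlock i j hi (not_lt.1 hj)]
      simp
  · rw [Hquad_eq_sum]
    apply Finset.sum_le_sum
    intro p _
    apply Finset.sum_le_sum
    intro q _
    by_cases hpq : (p : ℕ) < n ∧ (q : ℕ) < n
    · have h2 : 0 ≤ Bfi i p q * z q := mul_nonneg (hmod.bfiNonneg i p q) (hz q).1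
      have h1 : Bfi i p q * z q ≤ Bfi i p q := by
        nlinarith [hmod.bfiNonneg i p q, (hz q).1, hz1 q hpq.2]
      nlinarith [mul_nonneg (by linarith [hz1 p hpq.1, (hz p).1] : (0:ℝ) ≤ 1 - z p) h2]
    · rw [hmod.bfiBlock2 i hi p q hpq]
      simp

/-- On `D̄`, the infection pressure at any node is at most a fixed constant. -/
lemma hv_le_C {n N : ℕ} {Df Bf : Matrix (Fin N) (Fin N) ℝ}
    {Bfi : Fin N → Matrix (Fin N) (Fin N) ℝ} (hmod : ModelHyp n Df Bf Bfi)
    {z : Fin N → ℝ} (hz : ∀ j, 0 ≤ z j ∧ z j ≤ ubound n Df Bf Bfi j) (i : Fin N) :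
    Bf.mulVec z i + Hquad Bfi z i ≤
      (∑ j, Bf i j * ubound n Df Bf Bfi j)
      + ∑ p, ∑ q, Bfi i p q * (ubound n Df Bf Bfi p * ubound n Df Bf Bfi q) := by
  apply add_le_add
  · rw [mulVec_eq_sum]
    apply Finset.sum_le_sum
    intro j _
    exact mul_le_mul_of_nonneg_left (hz j).2 (hmod.bNonneg i j)
  · rw [Hquad_eq_sum]
    apply Finset.sum_le_sum
    intro p _
    apply Finset.sum_le_sum
    intro q _
    nlinarith [hmod.bfiNonneg i p q, (hz p).1, (hz p).2, (hz q).1, (hz q).2,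
      ubound_nonneg hmod p, ubound_nonneg hmod q,
      mul_nonneg (hmod.bfiNonneg i p q) (hz q).1,
      mul_le_mul_of_nonneg_left (hz q).2 (hmod.bfiNonneg i p q)]

/-- Exponential comparison: if `0 ≤ c g + g'` on `[0,T]` and `g 0 > 0` then `g T > 0`. -/
lemma pos_of_deriv (c T : ℝ) (hT : 0 ≤ T) (g g' : ℝ → ℝ)
    (hg : ∀ t ∈ Set.Icc 0 T, HasDerivAt g (g' t) t)
    (hge : ∀ t ∈ Set.Icc 0 T, 0 ≤ c * g t + g' t) (h0 : 0 < g 0) : 0 < g T := by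
  set f : ℝ → ℝ := fun t => Real.exp (c * t) * g t with hf
  have hfd : ∀ t ∈ Set.Icc (0:ℝ) T, HasDerivAt f (Real.exp (c * t) * (c * g t + g' t)) t := by
    intro t ht
    have h1 : HasDerivAt (fun s : ℝ => Real.exp (c * s)) (c * Real.exp (c * t)) t := by
      simpa [Function.comp_def, mul_comm] using (Real.hasDerivAt_exp (c * t)).comp t ((hasDerivAt_id t).const_mul c)
    have := h1.fun_mul (hg t ht)
    refine this.congr_deriv ?_
    ring
  have hmono : MonotoneOn f (Set.Icc 0 T) := by
    apply monotoneOn_of_deriv_nonneg (convex_Icc 0 T)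
    · intro t ht
      exact (hfd t ht).continuousAt.continuousWithinAt
    · intro t ht
      rw [interior_Icc] at ht
      exact (hfd t (Set.Ioo_subset_Icc_self ht)).differentiableAt.differentiableWithinAt
    · intro t ht
      rw [interior_Icc] at ht
      rw [(hfd t (Set.Ioo_subset_Icc_self ht)).deriv]
      exact mul_nonneg (Real.exp_pos _).le (hge t (Set.Ioo_subset_Icc_self ht))
  have hle : f 0 ≤ f T := hmono (Set.left_mem_Icc.2 hT) (Set.right_mem_Icc.2 hT) hT
  have hf0 : f 0 = g 0 := by simp [hf]
  have hfT : 0 < f T := by rw [hf0] at hle; linarith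
  have hexp := Real.exp_pos (c * T)
  by_contra hcon
  push_neg at hcon
  have : f T ≤ 0 := mul_nonpos_of_nonneg_of_nonpos hexp.le hcon
  linarith

/-- Exponential comparison: if `g' ≤ c g` on `[0,T]` and `g 0 ≤ 0` then `g T ≤ 0`. -/
lemma nonpos_of_deriv (c T : ℝ) (hT : 0 ≤ T) (g g' : ℝ → ℝ)
    (hg : ∀ t ∈ Set.Icc 0 T, HasDerivAt g (g' t) t)
    (hge : ∀ t ∈ Set.Icc 0 T, g' t ≤ c * g t) (h0 : g 0 ≤ 0) : g T ≤ 0 := by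
  set f : ℝ → ℝ := fun t => Real.exp (-c * t) * g t with hf
  have hfd : ∀ t ∈ Set.Icc (0:ℝ) T, HasDerivAt f (Real.exp (-c * t) * (g' t - c * g t)) t := by
    intro t ht
    have h1 : HasDerivAt (fun s : ℝ => Real.exp (-c * s)) (-c * Real.exp (-c * t)) t := by
      have h2 : HasDerivAt (fun s : ℝ => -c * s) (-c) t := by
        simpa using (hasDerivAt_id t).const_mul (-c)
      simpa [Function.comp_def, mul_comm] using (Real.hasDerivAt_exp (-c * t)).comp t h2
    have := h1.fun_mul (hg t ht)
    refine this.congr_deriv ?_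
    ring
  have hmono : AntitoneOn f (Set.Icc 0 T) := by
    apply antitoneOn_of_deriv_nonpos (convex_Icc 0 T)
    · intro t ht
      exact (hfd t ht).continuousAt.continuousWithinAt
    · intro t ht
      rw [interior_Icc] at ht
      exact (hfd t (Set.Ioo_subset_Icc_self ht)).differentiableAt.differentiableWithinAt
    · intro t ht
      rw [interior_Icc] at ht
      rw [(hfd t (Set.Ioo_subset_Icc_self ht)).deriv]
      apply mul_nonpos_of_nonneg_of_nonpos (Real.exp_pos _).le
      have := hge t (Set.Ioo_subset_Icc_self ht)
      linarith
  have hle : f T ≤ f 0 := hmono (Set.left_mem_Icc.2 hT) (Set.right_mem_Icc.2 hT) hT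
  have hf0 : f 0 = g 0 := by simp [hf]
  have hfT : f T ≤ 0 := by rw [hf0] at hle; linarith
  have hexp := Real.exp_pos (-c * T)
  by_contra hcon
  push_neg at hcon
  have : 0 < f T := mul_pos hexp hcon
  linarith

/-- lower product bound. -/
lemma neg_mul_bound {M a b : ℝ} (ha : |a| ≤ M) (hb : |b| ≤ M) :
    -(M * (max 0 (-a) + max 0 (-b))) ≤ a * b := by
  obtain ⟨ha1, ha2⟩ := abs_le.1 ha
  obtain ⟨hb1, hb2⟩ := abs_le.1 hb
  rcases le_total 0 a with h1 | h1 <;> rcases le_total 0 b with h2 | h2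
  · rw [max_eq_left (by linarith), max_eq_left (by linarith)]
    nlinarith
  · rw [max_eq_left (by linarith), max_eq_right (by linarith)]
    nlinarith
  · rw [max_eq_right (by linarith), max_eq_left (by linarith)]
    nlinarith
  · rw [max_eq_right (by linarith), max_eq_right (by linarith)]
    nlinarith

lemma clamp_decomp (x : ℝ) :
    ∃ c e : ℝ, x = c + e ∧ 0 ≤ c ∧ c ≤ 1 ∧ |e| ≤ max 0 (-x) + max 0 (x - 1) := by
  rcases le_total x 0 with h | h
  · refine ⟨0, x, by ring, le_refl 0, zero_le_one, ?_⟩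
    rw [abs_of_nonpos h, max_eq_right (by linarith), max_eq_left (by linarith)]
    linarith
  · rcases le_total x 1 with h' | h'
    · refine ⟨x, 0, by ring, h, h', ?_⟩
      have := add_nonneg (le_max_left (0:ℝ) (-x)) (le_max_left (0:ℝ) (x-1))
      simpa using this
    · refine ⟨1, x - 1, by ring, zero_le_one, le_refl 1, ?_⟩
      rw [abs_of_nonneg (by linarith), max_eq_left (by linarith), max_eq_right (by linarith)]
      linarith

set_option maxHeartbeats 1000000 in
/-- upper product bound. -/
lemma mul_ub_bound {M a b : ℝ} (hM : 1 ≤ M) (ha : |a| ≤ M) (hb : |b| ≤ M) :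
    a * b ≤ 1 + (3 * M) * ((max 0 (-a) + max 0 (a - 1)) + (max 0 (-b) + max 0 (b - 1))) := by
  obtain ⟨c, e, hxe, hc0, hc1, he⟩ := clamp_decomp a
  obtain ⟨c', e', hxe', hc0', hc1', he'⟩ := clamp_decomp b
  have hEa : (0:ℝ) ≤ max 0 (-a) + max 0 (a - 1) :=
    add_nonneg (le_max_left _ _) (le_max_left _ _)
  have hEb : (0:ℝ) ≤ max 0 (-b) + max 0 (b - 1) :=
    add_nonneg (le_max_left _ _) (le_max_left _ _)
  obtain ⟨he1, he2⟩ := abs_le.1 he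
  obtain ⟨he1', he2'⟩ := abs_le.1 he'
  have heM : |e| ≤ 2 * M := by
    have h5 : |e| ≤ |a| + 1 := by
      rw [hxe]
      calc |e| = |(c + e) - c| := by rw [add_sub_cancel_left]
        _ ≤ |c + e| + |c| := abs_sub (c+e) c
        _ ≤ |c + e| + 1 := by rw [abs_of_nonneg hc0]; linarith
    linarith
  obtain ⟨heM1, heM2⟩ := abs_le.1 heM
  have heM' : |e'| ≤ 2 * M := by
    have h5 : |e'| ≤ |b| + 1 := by
      rw [hxe']
      calc |e'| = |(c' + e') - c'| := by rw [add_sub_cancel_left]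
        _ ≤ |c' + e'| + |c'| := abs_sub (c'+e') c'
        _ ≤ |c' + e'| + 1 := by rw [abs_of_nonneg hc0']; linarith
    linarith
  obtain ⟨heM1', heM2'⟩ := abs_le.1 heM'
  have t1 : c * c' ≤ 1 := by nlinarith
  have t2 : c * e' ≤ M * (max 0 (-b) + max 0 (b - 1)) := by
    nlinarith [mul_nonneg hc0 (by linarith : 0 ≤ (max 0 (-b) + max 0 (b - 1)) - e'),
      mul_nonneg (by linarith : (0:ℝ) ≤ 1 - c) hEb,
      mul_nonneg (by linarith : (0:ℝ) ≤ M - 1) hEb]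
  have t3 : e * c' ≤ M * (max 0 (-a) + max 0 (a - 1)) := by
    nlinarith [mul_nonneg hc0' (by linarith : 0 ≤ (max 0 (-a) + max 0 (a - 1)) - e),
      mul_nonneg (by linarith : (0:ℝ) ≤ 1 - c') hEa,
      mul_nonneg (by linarith : (0:ℝ) ≤ M - 1) hEa]
  have t4 : e * e' ≤ 2 * M * (max 0 (-b) + max 0 (b - 1)) := by
    rcases le_total e 0 with h | h
    · nlinarith [mul_nonneg (by linarith : (0:ℝ) ≤ -e)
        (by linarith : 0 ≤ (max 0 (-b) + max 0 (b - 1)) + e'),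
        mul_nonneg (by linarith : (0:ℝ) ≤ 2*M + e) hEb]
    · nlinarith [mul_nonneg h (by linarith : 0 ≤ (max 0 (-b) + max 0 (b - 1)) - e'),
        mul_nonneg (by linarith : (0:ℝ) ≤ 2*M - e) hEb]
  nlinarith [t1, t2, t3, t4, hEa, hEb, hM]
set_option maxHeartbeats 2000000 in
/-- Master differential inequality: outside-violation functional has derivative ≤ K·(violation). -/
lemma key_bound {n N : ℕ} {Df Bf : Matrix (Fin N) (Fin N) ℝ}
    {Bfi : Fin N → Matrix (Fin N) (Fin N) ℝ}
    (hmod : ModelHyp n Df Bf Bfi) (M : ℝ) (hM : 1 ≤ M) :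
    ∃ K : ℝ, 0 ≤ K ∧ ∀ z : Fin N → ℝ, (∀ j, |z j| ≤ M) →
      (∑ i, (2 * max 0 (-(z i)) * (-(Gfield n Df Bf Bfi z i))
          + 2 * max 0 (z i - ubound n Df Bf Bfi i) * Gfield n Df Bf Bfi z i))
        ≤ K * ∑ i, (max 0 (-(z i)) ^ 2 + max 0 (z i - ubound n Df Bf Bfi i) ^ 2) := by
  have hM0 : (0:ℝ) ≤ M := by linarith
  set Bsum := ∑ i : Fin N, ∑ j, Bf i j with hBsumdef
  set Hsum := ∑ i : Fin N, ∑ p, ∑ q, Bfi i p q with hHsumdef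
  have hBsum0 : 0 ≤ Bsum :=
    Finset.sum_nonneg fun i _ => Finset.sum_nonneg fun j _ => hmod.bNonneg i j
  have hHsum0 : 0 ≤ Hsum :=
    Finset.sum_nonneg fun i _ => Finset.sum_nonneg fun p _ =>
      Finset.sum_nonneg fun q _ => hmod.bfiNonneg i p q
  set L := Bsum + 12 * M * Hsum with hLdef
  have hL0 : 0 ≤ L := by nlinarith
  set K0 := (1 + M) * L with hK0def
  have hK00 : 0 ≤ K0 := by nlinarith
  refine ⟨4 * (N:ℝ) * K0, mul_nonneg (by positivity) hK00, fun z hz => ?_⟩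
  set ub := ubound n Df Bf Bfi with hubdef
  set T := ∑ j, (max 0 (-(z j)) + max 0 (z j - ub j)) with hTdef
  have hu0 : ∀ j : Fin N, 0 ≤ max 0 (-(z j)) := fun j => le_max_left _ _
  have hv0 : ∀ j : Fin N, 0 ≤ max 0 (z j - ub j) := fun j => le_max_left _ _
  have hub0 : ∀ j, 0 ≤ ub j := fun j => ubound_nonneg hmod j
  have hT0 : 0 ≤ T := Finset.sum_nonneg fun j _ => add_nonneg (hu0 j) (hv0 j)
  have hsumle : ∀ j : Fin N, max 0 (-(z j)) + max 0 (z j - ub j) ≤ T := fun j =>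
    Finset.single_le_sum (f := fun j => max 0 (-(z j)) + max 0 (z j - ub j))
      (fun j _ => add_nonneg (hu0 j) (hv0 j)) (Finset.mem_univ j)
  have huT : ∀ j, max 0 (-(z j)) ≤ T := fun j =>
    le_trans (le_add_of_nonneg_right (hv0 j)) (hsumle j)
  have hvT : ∀ j, max 0 (z j - ub j) ≤ T := fun j =>
    le_trans (le_add_of_nonneg_left (hu0 j)) (hsumle j)
  have hzl : ∀ j, -(max 0 (-(z j))) ≤ z j := fun j => by
    have := le_max_right 0 (-(z j)); linarith
  have hzu : ∀ j, z j ≤ ub j + max 0 (z j - ub j) := fun j => by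
    have := le_max_right 0 (z j - ub j); linarith
  have hvM : ∀ j, max 0 (z j - ub j) ≤ M := fun j =>
    max_le hM0 (by linarith [(abs_le.1 (hz j)).2, hub0 j])
  have hBent : ∀ i j, Bf i j ≤ Bsum := by
    intro i j
    calc Bf i j ≤ ∑ j', Bf i j' :=
          Finset.single_le_sum (fun j' _ => hmod.bNonneg i j') (Finset.mem_univ j)
      _ ≤ Bsum := Finset.single_le_sum (f := fun i => ∑ j', Bf i j')
          (fun i _ => Finset.sum_nonneg fun j' _ => hmod.bNonneg i j') (Finset.mem_univ i)
  have hHtot : ∀ i, (∑ p, ∑ q, Bfi i p q) ≤ Hsum := fun i =>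
    Finset.single_le_sum (f := fun i => ∑ p, ∑ q, Bfi i p q)
      (fun i _ => Finset.sum_nonneg fun p _ => Finset.sum_nonneg fun q _ => hmod.bfiNonneg i p q)
      (Finset.mem_univ i)
  have hHpt0 : ∀ i : Fin N, 0 ≤ ∑ p, ∑ q, Bfi i p q := fun i =>
    Finset.sum_nonneg fun p _ => Finset.sum_nonneg fun q _ => hmod.bfiNonneg i p q
  -- claim A : lower bound for the infection pressure
  have claimA : ∀ i, -(L * T) ≤ Bf.mulVec z i + Hquad Bfi z i := by
    intro i
    have h1 : -(Bsum * T) ≤ Bf.mulVec z i := by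
      rw [mulVec_eq_sum]
      have hpt : ∀ j, -(Bsum * (max 0 (-(z j)) + max 0 (z j - ub j))) ≤ Bf i j * z j := by
        intro j
        nlinarith [mul_nonneg (sub_nonneg.2 (hBent i j)) (hu0 j),
          mul_nonneg (hmod.bNonneg i j) (by linarith [hzl j] : (0:ℝ) ≤ z j + max 0 (-(z j))),
          mul_nonneg hBsum0 (hv0 j)]
      calc -(Bsum * T) = ∑ j, -(Bsum * (max 0 (-(z j)) + max 0 (z j - ub j))) := by
            rw [hTdef, Finset.mul_sum, Finset.sum_neg_distrib]
        _ ≤ ∑ j, Bf i j * z j := Finset.sum_le_sum fun j _ => hpt j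
    have h2 : -((12 * M * Hsum) * T) ≤ Hquad Bfi z i := by
      rw [Hquad_eq_sum]
      have hpt : ∀ p q : Fin N, -(Bfi i p q * (2 * M * T)) ≤ z p * (Bfi i p q * z q) := by
        intro p q
        have hL1 := neg_mul_bound (hz p) (hz q)
        nlinarith [mul_nonneg (hmod.bfiNonneg i p q)
            (by nlinarith : (0:ℝ) ≤ z p * z q + M * (max 0 (-(z p)) + max 0 (-(z q)))),
          mul_nonneg (mul_nonneg (hmod.bfiNonneg i p q) hM0)
            (by linarith [huT p, huT q] : (0:ℝ) ≤ 2 * T - max 0 (-(z p)) - max 0 (-(z q)))]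
      have hsum : (∑ p, ∑ q, -(Bfi i p q * (2 * M * T)))
          = -((∑ p, ∑ q, Bfi i p q) * (2 * M * T)) := by
        rw [Finset.sum_mul]
        rw [← Finset.sum_neg_distrib]
        refine Finset.sum_congr rfl fun p _ => ?_
        rw [Finset.sum_mul, ← Finset.sum_neg_distrib]
      calc -((12 * M * Hsum) * T) ≤ -((∑ p, ∑ q, Bfi i p q) * (2 * M * T)) := by
            nlinarith [mul_nonneg (mul_nonneg hM0 hT0)
              (by linarith [hHtot i, hHpt0 i] : (0:ℝ) ≤ 12 * Hsum - 2 * (∑ p, ∑ q, Bfi i p q))]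
        _ = ∑ p, ∑ q, -(Bfi i p q * (2 * M * T)) := hsum.symm
        _ ≤ ∑ p, ∑ q, z p * (Bfi i p q * z q) :=
            Finset.sum_le_sum fun p _ => Finset.sum_le_sum fun q _ => hpt p q
    have : -(L * T) = -(Bsum * T) + -((12 * M * Hsum) * T) := by rw [hLdef]; ring
    linarith
  -- claim B : upper bound for the infection pressure at water nodes
  have claimB : ∀ i : Fin N, n ≤ (i:ℕ) →
      Bf.mulVec z i + Hquad Bfi z i ≤ Df i i * ub i + L * T := by
    intro i hi
    have hub : Df i i * ub i = (∑ q, Bf i q) + ∑ p, ∑ q, Bfi i p q := by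
      rw [hubdef]
      unfold ubound
      rw [if_neg (not_lt.2 hi), mul_comm]
      exact div_mul_cancel₀ _ (ne_of_gt (hmod.dPos i))
    have h1 : Bf.mulVec z i ≤ (∑ j, Bf i j) + Bsum * T := by
      rw [mulVec_eq_sum]
      have hpt : ∀ j, Bf i j * z j ≤ Bf i j + Bsum * (max 0 (-(z j)) + max 0 (z j - ub j)) := by
        intro j
        by_cases hj : (j : ℕ) < n
        · have hubj : ub j = 1 := by rw [hubdef]; unfold ubound; rw [if_pos hj]
          have hzle : z j ≤ 1 + max 0 (z j - ub j) := by
            have := hzu j; rw [hubj] at this ⊢; linarith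
          have p1 : 0 ≤ Bf i j * (1 + max 0 (z j - ub j) - z j) :=
            mul_nonneg (hmod.bNonneg i j) (by linarith)
          have p2 : 0 ≤ (Bsum - Bf i j) * max 0 (z j - ub j) :=
            mul_nonneg (sub_nonneg.2 (hBent i j)) (hv0 j)
          have p3 : 0 ≤ Bsum * max 0 (-(z j)) := mul_nonneg hBsum0 (hu0 j)
          nlinarith [p1, p2, p3]
        · rw [hmod.bBlock i j hi (not_lt.1 hj)]
          have := mul_nonneg hBsum0 (add_nonneg (hu0 j) (hv0 j))
          nlinarith
      calc ∑ j, Bf i j * z j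
          ≤ ∑ j, (Bf i j + Bsum * (max 0 (-(z j)) + max 0 (z j - ub j))) :=
            Finset.sum_le_sum fun j _ => hpt j
        _ = (∑ j, Bf i j) + Bsum * T := by
            rw [Finset.sum_add_distrib, ← Finset.mul_sum, hTdef]
    have h2 : Hquad Bfi z i ≤ (∑ p, ∑ q, Bfi i p q) + (12 * M * Hsum) * T := by
      rw [Hquad_eq_sum]
      have hpt : ∀ p q : Fin N,
          z p * (Bfi i p q * z q) ≤ Bfi i p q + Bfi i p q * (12 * M * T) := by
        intro p q
        by_cases hpq : (p : ℕ) < n ∧ (q : ℕ) < n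
        · have hubp : ub p = 1 := by rw [hubdef]; unfold ubound; rw [if_pos hpq.1]
          have hubq : ub q = 1 := by rw [hubdef]; unfold ubound; rw [if_pos hpq.2]
          have hL2 := mul_ub_bound hM (hz p) (hz q)
          rw [show z p - 1 = z p - ub p by rw [hubp], show z q - 1 = z q - ub q by rw [hubq]] at hL2
          -- z p * z q ≤ 1 + 3M * (up + vp + uq + vq) ≤ 1 + 12 M T
          have hsum4 : (max 0 (-(z p)) + max 0 (z p - ub p)) + (max 0 (-(z q)) + max 0 (z q - ub q)) ≤ 2 * T := by
            linarith [hsumle p, hsumle q]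
          have hzz : z p * z q ≤ 1 + 12 * M * T := by
            nlinarith [mul_nonneg (mul_nonneg (by linarith : (0:ℝ) ≤ 3 * M) hT0) (by norm_num : (0:ℝ) ≤ 2),
              mul_nonneg hM0 hT0]
          have p1 : 0 ≤ Bfi i p q * (1 + 12 * M * T - z p * z q) :=
            mul_nonneg (hmod.bfiNonneg i p q) (by linarith)
          nlinarith [p1]
        · rw [hmod.bfiBlock2 i hi p q hpq]
          have := mul_nonneg (hmod.bfiNonneg i p q) (mul_nonneg (mul_nonneg (by norm_num : (0:ℝ) ≤ 12) hM0) hT0)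
          nlinarith
      calc ∑ p, ∑ q, z p * (Bfi i p q * z q)
          ≤ ∑ p, ∑ q, (Bfi i p q + Bfi i p q * (12 * M * T)) :=
            Finset.sum_le_sum fun p _ => Finset.sum_le_sum fun q _ => hpt p q
        _ = (∑ p, ∑ q, Bfi i p q) + (∑ p, ∑ q, Bfi i p q) * (12 * M * T) := by
            rw [Finset.sum_mul]
            rw [← Finset.sum_add_distrib]
            refine Finset.sum_congr rfl fun p _ => ?_
            rw [Finset.sum_mul, ← Finset.sum_add_distrib]
        _ ≤ (∑ p, ∑ q, Bfi i p q) + (12 * M * Hsum) * T := by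
            nlinarith [mul_nonneg (mul_nonneg hM0 hT0)
              (by linarith [hHtot i] : (0:ℝ) ≤ 12 * (Hsum - (∑ p, ∑ q, Bfi i p q)))]
    have hBrow0 : 0 ≤ ∑ j, Bf i j := Finset.sum_nonneg fun j _ => hmod.bNonneg i j
    have : (∑ q, Bf i q) = (∑ j, Bf i j) := rfl
    rw [hub, hLdef]
    linarith [h1, h2]
  -- pointwise form of the vector field
  have hGA : ∀ i, Gfield n Df Bf Bfi z i =
      -(Df i i * z i) + (1 - (if (i : ℕ) < n then z i else 0)) *
        (Bf.mulVec z i + Hquad Bfi z i) := fun i => Gfield_apply _ _ _ hmod.dDiag z i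
  have hLT0 : 0 ≤ L * T := mul_nonneg hL0 hT0
  -- per-index bound, u-part
  have hperA : ∀ i, max 0 (-(z i)) * (-(Gfield n Df Bf Bfi z i))
      ≤ K0 * (max 0 (-(z i)) * T) := by
    intro i
    rcases eq_or_lt_of_le (hu0 i) with h | h
    · rw [← h]
      simp
    · have hzi : z i < 0 := by
        by_contra hc
        push_neg at hc
        have : max 0 (-(z i)) = 0 := max_eq_left (by linarith)
        linarith
      have hw1 : 1 ≤ 1 - (if (i : ℕ) < n then z i else 0) := by split <;> linarith
      have hw2 : 1 - (if (i : ℕ) < n then z i else 0) ≤ 1 + M := by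
        split
        · linarith [(abs_le.1 (hz i)).1]
        · linarith
      have hd := hmod.dPos i
      have h1 : -(Gfield n Df Bf Bfi z i) ≤ K0 * T := by
        rw [hGA i]
        have p1 : 0 ≤ (1 - (if (i : ℕ) < n then z i else 0)) * ((Bf.mulVec z i + Hquad Bfi z i) + L * T) :=
          mul_nonneg (by linarith) (by linarith [claimA i])
        have p2 : 0 ≤ (L * T) * ((1 + M) - (1 - (if (i : ℕ) < n then z i else 0))) :=
          mul_nonneg hLT0 (by linarith)
        have p3 : Df i i * z i ≤ 0 := mul_nonpos_of_nonneg_of_nonpos hd.le hzi.le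
        rw [hK0def]
        nlinarith [p1, p2, p3]
      calc max 0 (-(z i)) * (-(Gfield n Df Bf Bfi z i))
          ≤ max 0 (-(z i)) * (K0 * T) := mul_le_mul_of_nonneg_left h1 (hu0 i)
        _ = K0 * (max 0 (-(z i)) * T) := by ring
  -- per-index bound, v-part
  have hperB : ∀ i, max 0 (z i - ub i) * Gfield n Df Bf Bfi z i
      ≤ K0 * (max 0 (z i - ub i) * T) := by
    intro i
    rcases eq_or_lt_of_le (hv0 i) with h | h
    · rw [← h]
      simp
    · have hzi : ub i < z i := by
        by_contra hc
        push_neg at hc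
        have : max 0 (z i - ub i) = 0 := max_eq_left (by linarith)
        linarith
      have hvv : max 0 (z i - ub i) = z i - ub i := max_eq_right (by linarith)
      have hd := hmod.dPos i
      have h1 : Gfield n Df Bf Bfi z i ≤ K0 * T := by
        rw [hGA i]
        by_cases hin : (i : ℕ) < n
        · rw [if_pos hin]
          have hub1 : ub i = 1 := by rw [hubdef]; unfold ubound; rw [if_pos hin]
          have hz1 : 1 < z i := by rw [← hub1]; exact hzi
          have p1 : 0 ≤ (z i - 1) * ((Bf.mulVec z i + Hquad Bfi z i) + L * T) :=
            mul_nonneg (by linarith) (by linarith [claimA i])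
          have p2 : 0 ≤ (L * T) * (M - (z i - 1)) := by
            apply mul_nonneg hLT0
            have := hvM i
            rw [hvv, hub1] at this
            linarith
          have p3 : 0 ≤ Df i i * z i := mul_nonneg hd.le (by linarith)
          rw [hK0def]
          nlinarith [p1, p2, p3, hLT0]
        · rw [if_neg hin]
          have hB := claimB i (not_lt.1 hin)
          have hzeq : z i = ub i + max 0 (z i - ub i) := by rw [hvv]; ring
          have p1 : 0 ≤ Df i i * max 0 (z i - ub i) := mul_nonneg hd.le (hv0 i)
          have p2 : 0 ≤ (M * L) * T := mul_nonneg (mul_nonneg hM0 hL0) hT0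
          rw [hK0def]
          nlinarith [hB, p1, p2]
      calc max 0 (z i - ub i) * Gfield n Df Bf Bfi z i
          ≤ max 0 (z i - ub i) * (K0 * T) := mul_le_mul_of_nonneg_left h1 (hv0 i)
        _ = K0 * (max 0 (z i - ub i) * T) := by ring
  -- summation
  have h2K0 : (0:ℝ) ≤ 2 * K0 := by linarith
  calc (∑ i, (2 * max 0 (-(z i)) * (-(Gfield n Df Bf Bfi z i))
          + 2 * max 0 (z i - ub i) * Gfield n Df Bf Bfi z i))
      ≤ ∑ i, 2 * K0 * ((max 0 (-(z i)) + max 0 (z i - ub i)) * T) := by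
        apply Finset.sum_le_sum
        intro i _
        have hA := hperA i
        have hB := hperB i
        nlinarith [hA, hB]
    _ = 2 * K0 * (T * T) := by
        rw [← Finset.mul_sum, ← Finset.sum_mul, ← hTdef]
    _ ≤ 2 * K0 * ((N:ℝ) * ∑ j, (max 0 (-(z j)) + max 0 (z j - ub j)) ^ 2) := by
        apply mul_le_mul_of_nonneg_left _ h2K0
        have hcs := sq_sum_le_card_mul_sum_sq
          (s := (Finset.univ : Finset (Fin N))) (f := fun j => max 0 (-(z j)) + max 0 (z j - ub j))
        rw [Finset.card_univ, Fintype.card_fin] at hcs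
        calc T * T = (∑ j, (max 0 (-(z j)) + max 0 (z j - ub j))) ^ 2 := by rw [← hTdef]; ring
          _ ≤ (N:ℝ) * ∑ j, (max 0 (-(z j)) + max 0 (z j - ub j)) ^ 2 := hcs
    _ ≤ 2 * K0 * ((N:ℝ) * ∑ j, 2 * (max 0 (-(z j)) ^ 2 + max 0 (z j - ub j) ^ 2)) := by
        apply mul_le_mul_of_nonneg_left _ h2K0
        apply mul_le_mul_of_nonneg_left _ (Nat.cast_nonneg N)
        exact Finset.sum_le_sum fun j _ => by nlinarith [sq_nonneg (max 0 (-(z j)) - max 0 (z j - ub j))]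
    _ = 4 * (N:ℝ) * K0 * ∑ i, (max 0 (-(z i)) ^ 2 + max 0 (z i - ub i) ^ 2) := by
        rw [← Finset.mul_sum]
        ring

end SIWSAux

lemma dbar_invariant {n N : ℕ} {Df Bf : Matrix (Fin N) (Fin N) ℝ}
    {Bfi : Fin N → Matrix (Fin N) (Fin N) ℝ} (hmod : ModelHyp n Df Bf Bfi)
    (z : ℝ → Fin N → ℝ) (hsol : IsSolution (Gfield n Df Bf Bfi) z)
    (hz0 : z 0 ∈ Dbar n Df Bf Bfi) : ∀ t : ℝ, 0 ≤ t → z t ∈ Dbar n Df Bf Bfi := by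
  intro T hT
  simp only [Dbar, Set.mem_setOf_eq] at hz0 ⊢
  have hcont : ContinuousOn z (Set.Icc 0 T) := fun t ht =>
    (hsol t ht.1).continuousAt.continuousWithinAt
  obtain ⟨C, hC⟩ := isCompact_Icc.exists_bound_of_continuousOn hcont
  set M := max C 1 with hMdef
  have hM1 : (1:ℝ) ≤ M := le_max_right _ _
  have hzM : ∀ t ∈ Set.Icc (0:ℝ) T, ∀ j, |z t j| ≤ M := by
    intro t ht j
    calc |z t j| = ‖z t j‖ := rfl
      _ ≤ ‖z t‖ := norm_le_pi_norm (z t) j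
      _ ≤ C := hC t ht
      _ ≤ M := le_max_left _ _
  obtain ⟨K, hK0, hK⟩ := SIWSAux.key_bound hmod M hM1
  set φ : ℝ → ℝ := fun t =>
    ∑ i, (max 0 (-(z t i)) ^ 2 + max 0 (z t i - ubound n Df Bf Bfi i) ^ 2) with hφdef
  set φ' : ℝ → ℝ := fun t =>
    ∑ i, (2 * max 0 (-(z t i)) * (-(Gfield n Df Bf Bfi (z t) i))
      + 2 * max 0 (z t i - ubound n Df Bf Bfi i) * Gfield n Df Bf Bfi (z t) i) with hφ'def
  have hder : ∀ t ∈ Set.Icc (0:ℝ) T, HasDerivAt φ (φ' t) t := by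
    intro t ht
    rw [hφdef, hφ'def]
    apply HasDerivAt.fun_sum
    intro i _
    have hzi : HasDerivAt (fun s => z s i) (Gfield n Df Bf Bfi (z t) i) t :=
      hasDerivAt_pi.1 (hsol t ht.1) i
    have h1 : HasDerivAt (fun s => max 0 (-(z s i)) ^ 2)
        (2 * max 0 (-(z t i)) * (-(Gfield n Df Bf Bfi (z t) i))) t := by
      have := (SIWSAux.max_sq_hasDerivAt (-(z t i))).comp t hzi.neg
      simpa [Function.comp_def] using this
    have h2 : HasDerivAt (fun s => max 0 (z s i - ubound n Df Bf Bfi i) ^ 2)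
        (2 * max 0 (z t i - ubound n Df Bf Bfi i) * Gfield n Df Bf Bfi (z t) i) t := by
      have := (SIWSAux.max_sq_hasDerivAt (z t i - ubound n Df Bf Bfi i)).comp t
        (hzi.sub_const (ubound n Df Bf Bfi i))
      simpa [Function.comp_def] using this
    exact h1.add h2
  have hineq : ∀ t ∈ Set.Icc (0:ℝ) T, φ' t ≤ K * φ t := by
    intro t ht
    rw [hφdef, hφ'def]
    exact hK (z t) (hzM t ht)
  have hφ0 : φ 0 ≤ 0 := by
    rw [hφdef]
    apply le_of_eq
    apply Finset.sum_eq_zero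
    intro i _
    have h1 := (hz0 i).1
    have h2 := (hz0 i).2
    rw [max_eq_left (by linarith), max_eq_left (by linarith)]
    norm_num
  have hφT : φ T ≤ 0 := SIWSAux.nonpos_of_deriv K T hT φ φ' hder hineq hφ0
  have hφTge : 0 ≤ φ T := by
    rw [hφdef]
    exact Finset.sum_nonneg fun i _ => add_nonneg (sq_nonneg _) (sq_nonneg _)
  have hφTeq : φ T = 0 := le_antisymm hφT hφTge
  rw [hφdef] at hφTeq
  intro i
  have hterm := (Finset.sum_eq_zero_iff_of_nonneg
    (fun i _ => add_nonneg (sq_nonneg _) (sq_nonneg _))).1 hφTeq i (Finset.mem_univ i)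
  have ha2 : max 0 (-(z T i)) ^ 2 = 0 := by
    nlinarith [sq_nonneg (max 0 (z T i - ubound n Df Bf Bfi i)), sq_nonneg (max 0 (-(z T i)))]
  have hb2 : max 0 (z T i - ubound n Df Bf Bfi i) ^ 2 = 0 := by
    nlinarith [sq_nonneg (max 0 (z T i - ubound n Df Bf Bfi i)), sq_nonneg (max 0 (-(z T i)))]
  have ha := pow_eq_zero_iff (by norm_num : (2:ℕ) ≠ 0) |>.1 ha2
  have hb := pow_eq_zero_iff (by norm_num : (2:ℕ) ≠ 0) |>.1 hb2
  constructor
  · have := le_max_right 0 (-(z T i))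
    rw [ha] at this
    linarith
  · have := le_max_right 0 (z T i - ubound n Df Bf Bfi i)
    rw [hb] at this
    linarith

lemma dint_invariant {n N : ℕ} {Df Bf : Matrix (Fin N) (Fin N) ℝ}
    {Bfi : Fin N → Matrix (Fin N) (Fin N) ℝ} (hmod : ModelHyp n Df Bf Bfi)
    (z : ℝ → Fin N → ℝ) (hsol : IsSolution (Gfield n Df Bf Bfi) z)
    (hz0 : z 0 ∈ Dint n Df Bf Bfi) : ∀ t : ℝ, 0 ≤ t → z t ∈ Dint n Df Bf Bfi := by
  intro T hT
  simp only [Dint, Set.mem_setOf_eq] at hz0 ⊢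
  have hz0' : z 0 ∈ Dbar n Df Bf Bfi := by
    simp only [Dbar, Set.mem_setOf_eq]
    exact fun i => ⟨(hz0 i).1.le, (hz0 i).2.le⟩
  have hDbar : ∀ t ∈ Set.Icc (0:ℝ) T, ∀ j, 0 ≤ z t j ∧ z t j ≤ ubound n Df Bf Bfi j := by
    intro t ht
    have := dbar_invariant hmod z hsol hz0' t ht.1
    simpa [Dbar, Set.mem_setOf_eq] using this
  have hGA : ∀ (w : Fin N → ℝ) (i : Fin N), Gfield n Df Bf Bfi w i =
      -(Df i i * w i) + (1 - (if (i : ℕ) < n then w i else 0)) *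
        (Bf.mulVec w i + Hquad Bfi w i) :=
    fun w i => SIWSAux.Gfield_apply _ _ _ hmod.dDiag w i
  intro i
  have hderi : ∀ t ∈ Set.Icc (0:ℝ) T, HasDerivAt (fun s => z s i)
      (Gfield n Df Bf Bfi (z t) i) t :=
    fun t ht => hasDerivAt_pi.1 (hsol t ht.1) i
  constructor
  · apply SIWSAux.pos_of_deriv (Df i i) T hT (fun t => z t i)
      (fun t => Gfield n Df Bf Bfi (z t) i) hderi _ (hz0 i).1
    intro t ht
    beta_reduce
    have hmem := hDbar t ht
    have h1 := SIWSAux.hv_nonneg hmod (fun j => (hmem j).1) i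
    have h2 : 0 ≤ 1 - (if (i:ℕ) < n then z t i else 0) := by
      split
      · rename_i hin
        have := (hmem i).2
        unfold ubound at this
        rw [if_pos hin] at this
        linarith
      · norm_num
    rw [hGA (z t) i]
    have := mul_nonneg h2
      (by linarith [h1.1, h1.2] : 0 ≤ Bf.mulVec (z t) i + Hquad Bfi (z t) i)
    linarith
  · by_cases hin : (i:ℕ) < n
    · have hkey : 0 < 1 - z T i := by
        apply SIWSAux.pos_of_deriv ((∑ j, Bf i j * ubound n Df Bf Bfi j)
            + ∑ p, ∑ q, Bfi i p q * (ubound n Df Bf Bfi p * ubound n Df Bf Bfi q)) T hT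
          (fun t => 1 - z t i) (fun t => -(Gfield n Df Bf Bfi (z t) i))
        · intro t ht
          exact (hderi t ht).const_sub 1
        · intro t ht
          beta_reduce
          have hmem := hDbar t ht
          have hC := SIWSAux.hv_le_C hmod hmem i
          have h1 := SIWSAux.hv_nonneg hmod (fun j => (hmem j).1) i
          have hz1 : z t i ≤ 1 := by
            have := (hmem i).2
            unfold ubound at this
            rwa [if_pos hin] at this
          rw [hGA (z t) i, if_pos hin]
          have p1 : 0 ≤ (1 - z t i) * (((∑ j, Bf i j * ubound n Df Bf Bfi j)
              + ∑ p, ∑ q, Bfi i p q * (ubound n Df Bf Bfi p * ubound n Df Bf Bfi q))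
              - (Bf.mulVec (z t) i + Hquad Bfi (z t) i)) :=
            mul_nonneg (by linarith) (by linarith)
          have p2 : 0 ≤ Df i i * z t i := mul_nonneg (hmod.dPos i).le (hmem i).1
          nlinarith [p1, p2]
        · have := (hz0 i).2
          unfold ubound at this
          rw [if_pos hin] at this
          linarith
      unfold ubound
      rw [if_pos hin]
      linarith
    · have hkey : 0 < ubound n Df Bf Bfi i - z T i := by
        apply SIWSAux.pos_of_deriv (Df i i) T hT (fun t => ubound n Df Bf Bfi i - z t i)
          (fun t => -(Gfield n Df Bf Bfi (z t) i))
        · intro t ht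
          exact (hderi t ht).const_sub _
        · intro t ht
          beta_reduce
          have hmem := hDbar t ht
          have hw := SIWSAux.hv_le_w hmod hmem (not_lt.1 hin)
          rw [hGA (z t) i, if_neg hin]
          nlinarith [hw]
        · exact sub_pos.2 (hz0 i).2
      linarith


lemma Gfield_zero {n N : ℕ} (Df Bf : Matrix (Fin N) (Fin N) ℝ)
    (Bfi : Fin N → Matrix (Fin N) (Fin N) ℝ) : Gfield n Df Bf Bfi 0 = 0 := by
  have hH : Hquad Bfi (0 : Fin N → ℝ) = 0 := by
    funext i
    simp [Hquad]
  funext i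
  simp [Gfield, hH, Matrix.mulVec_zero]

lemma boundary_equilibrium {n N : ℕ} {Df Bf : Matrix (Fin N) (Fin N) ℝ}
    {Bfi : Fin N → Matrix (Fin N) (Fin N) ℝ} (hmod : ModelHyp n Df Bf Bfi)
    (hirr : Irred Bf) (zs : Fin N → ℝ) (hzbar : zs ∈ Dbar n Df Bf Bfi)
    (hznotint : zs ∉ Dint n Df Bf Bfi) (heq : Gfield n Df Bf Bfi zs = 0) : zs = 0 := by
  simp only [Dbar, Set.mem_setOf_eq] at hzbar
  have heqi : ∀ i, Df i i * zs i =
      (1 - (if (i : ℕ) < n then zs i else 0)) * (Bf.mulVec zs i + Hquad Bfi zs i) := by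
    intro i
    have h := congrFun heq i
    rw [SIWSAux.Gfield_apply _ _ _ hmod.dDiag zs i] at h
    have h0 : (0 : Fin N → ℝ) i = 0 := rfl
    rw [h0] at h
    linarith
  have step1 : ∀ i : Fin N, (i : ℕ) < n → zs i < 1 := by
    intro i hi
    have hle : zs i ≤ 1 := by
      have := (hzbar i).2
      unfold ubound at this
      rwa [if_pos hi] at this
    rcases lt_or_eq_of_le hle with h | h
    · exact h
    · exfalso
      have hh := heqi i
      rw [if_pos hi, h] at hh
      simp at hh
      linarith [hmod.dPos i]
  have hzero_prop : ∀ i, zs i = 0 → ∀ j, Bf i j * zs j = 0 := by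
    intro i hzi j
    have h := heqi i
    rw [hzi, ite_self] at h
    have hv0 := SIWSAux.hv_nonneg hmod (fun j => (hzbar j).1) i
    have hsum : Bf.mulVec zs i + Hquad Bfi zs i = 0 := by linarith
    have hB0 : Bf.mulVec zs i = 0 := by linarith [hv0.1, hv0.2]
    rw [SIWSAux.mulVec_eq_sum] at hB0
    exact (Finset.sum_eq_zero_iff_of_nonneg
      (fun j _ => mul_nonneg (hmod.bNonneg i j) (hzbar j).1)).1 hB0 j (Finset.mem_univ j)
  have step2 : ∃ i, zs i = 0 := by
    have hex : ∃ i, ¬(0 < zs i ∧ zs i < ubound n Df Bf Bfi i) := by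
      by_contra hc
      push_neg at hc
      exact hznotint (fun i => hc i)
    obtain ⟨i, hi⟩ := hex
    rcases eq_or_lt_of_le (hzbar i).1 with h0 | h0
    · exact ⟨i, h0.symm⟩
    rcases eq_or_lt_of_le (hzbar i).2 with h1 | h1
    swap
    · exact absurd ⟨h0, h1⟩ hi
    by_cases hin : (i : ℕ) < n
    · exfalso
      have hub1 : ubound n Df Bf Bfi i = 1 := by unfold ubound; rw [if_pos hin]
      rw [hub1] at h1
      linarith [step1 i hin]
    · have hni : n ≤ (i : ℕ) := not_lt.1 hin
      have hub : Df i i * ubound n Df Bf Bfi i = (∑ q, Bf i q) + ∑ p, ∑ q, Bfi i p q := by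
        unfold ubound
        rw [if_neg hin, mul_comm]
        exact div_mul_cancel₀ _ (ne_of_gt (hmod.dPos i))
      have heq2 : Bf.mulVec zs i + Hquad Bfi zs i = (∑ q, Bf i q) + ∑ p, ∑ q, Bfi i p q := by
        have hh := heqi i
        rw [if_neg hin] at hh
        rw [← hub, ← h1]
        linarith
      rw [SIWSAux.mulVec_eq_sum, SIWSAux.Hquad_eq_sum] at heq2
      have hz1 : ∀ j : Fin N, (j : ℕ) < n → zs j ≤ 1 := by
        intro j hj
        exact (step1 j hj).le
      have hptB : ∀ j, Bf i j * zs j ≤ Bf i j := by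
        intro j
        by_cases hj : (j : ℕ) < n
        · nlinarith [hmod.bNonneg i j, (hzbar j).1, hz1 j hj]
        · rw [hmod.bBlock i j hni (not_lt.1 hj)]
          simp
      have hptH : ∀ p q, zs p * (Bfi i p q * zs q) ≤ Bfi i p q := by
        intro p q
        by_cases hpq : (p : ℕ) < n ∧ (q : ℕ) < n
        · have h2 : 0 ≤ Bfi i p q * zs q := mul_nonneg (hmod.bfiNonneg i p q) (hzbar q).1
          have h1' : Bfi i p q * zs q ≤ Bfi i p q := by
            nlinarith [hmod.bfiNonneg i p q, (hzbar q).1, hz1 q hpq.2]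
          nlinarith [mul_nonneg (by linarith [hz1 p hpq.1, (hzbar p).1] : (0:ℝ) ≤ 1 - zs p) h2]
        · rw [hmod.bfiBlock2 i hni p q hpq]
          simp
      -- equality forces pointwise equality
      have hsplit : (∑ j, (Bf i j - Bf i j * zs j))
          + (∑ p, ∑ q, (Bfi i p q - zs p * (Bfi i p q * zs q))) = 0 := by
        rw [Finset.sum_sub_distrib]
        have : (∑ p, ∑ q, (Bfi i p q - zs p * (Bfi i p q * zs q)))
            = (∑ p, ∑ q, Bfi i p q) - ∑ p, ∑ q, zs p * (Bfi i p q * zs q) := by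
          rw [← Finset.sum_sub_distrib]
          exact Finset.sum_congr rfl fun p _ => by rw [Finset.sum_sub_distrib]
        rw [this]
        linarith
      have hB0 : ∀ j, Bf i j - Bf i j * zs j = 0 := by
        have h2 : 0 ≤ ∑ p, ∑ q, (Bfi i p q - zs p * (Bfi i p q * zs q)) :=
          Finset.sum_nonneg fun p _ => Finset.sum_nonneg fun q _ => by linarith [hptH p q]
        have h3 : 0 ≤ ∑ j, (Bf i j - Bf i j * zs j) :=
          Finset.sum_nonneg fun j _ => by linarith [hptB j]
        have hzero : (∑ j, (Bf i j - Bf i j * zs j)) = 0 := by linarith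
        intro j
        exact (Finset.sum_eq_zero_iff_of_nonneg
          (fun j _ => by linarith [hptB j])).1 hzero j (Finset.mem_univ j)
      have hH0 : ∀ p q, Bfi i p q - zs p * (Bfi i p q * zs q) = 0 := by
        have h3 : 0 ≤ ∑ j, (Bf i j - Bf i j * zs j) :=
          Finset.sum_nonneg fun j _ => by linarith [hptB j]
        have h2 : (∑ p, ∑ q, (Bfi i p q - zs p * (Bfi i p q * zs q))) = 0 := by
          have h4 : 0 ≤ ∑ p, ∑ q, (Bfi i p q - zs p * (Bfi i p q * zs q)) :=
            Finset.sum_nonneg fun p _ => Finset.sum_nonneg fun q _ => by linarith [hptH p q]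
          linarith
        intro p q
        have h5 := (Finset.sum_eq_zero_iff_of_nonneg
          (fun p _ => Finset.sum_nonneg fun q _ =>
            (by linarith [hptH p q] : (0:ℝ) ≤ Bfi i p q - zs p * (Bfi i p q * zs q)))).1 h2
          p (Finset.mem_univ p)
        exact (Finset.sum_eq_zero_iff_of_nonneg
          (fun q _ => by linarith [hptH p q])).1 h5 q (Finset.mem_univ q)
      have hBrow : ∀ j, Bf i j = 0 := by
        intro j
        by_cases hj : (j : ℕ) < n
        · have h6 := hB0 j
          have h7 := step1 j hj
          nlinarith [hmod.bNonneg i j]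
        · exact hmod.bBlock i j hni (not_lt.1 hj)
      have hHrow : ∀ p q, Bfi i p q = 0 := by
        intro p q
        by_cases hpq : (p : ℕ) < n ∧ (q : ℕ) < n
        · have h6 := hH0 p q
          have h7 := step1 p hpq.1
          have h8 := (hzbar p).1
          have h9 := (hzbar q).1
          have h10 := hz1 q hpq.2
          rcases eq_or_lt_of_le (hmod.bfiNonneg i p q) with hB | hB
          · exact hB.symm
          · exfalso
            have hp1 : 0 ≤ zs p * (1 - zs q) := mul_nonneg h8 (by linarith)
            nlinarith [mul_pos hB (by linarith : (0:ℝ) < 1 - zs p), mul_nonneg hB.le hp1]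
        · exact hmod.bfiBlock2 i hni p q hpq
      have hub0 : ubound n Df Bf Bfi i = 0 := by
        unfold ubound
        rw [if_neg hin, Finset.sum_eq_zero (fun q _ => hBrow q),
          Finset.sum_eq_zero (fun p _ => Finset.sum_eq_zero fun q _ => hHrow p q)]
        simp
      exact ⟨i, by rw [h1, hub0]⟩
  obtain ⟨i0, hi0⟩ := step2
  have hall : ∀ j, zs j = 0 := by
    intro j
    by_cases hji : j = i0
    · rw [hji]; exact hi0
    obtain ⟨r, k, hk0, hkr, hstep⟩ := hirr i0 j (Ne.symm hji)
    have hchain : ∀ s, s ≤ r → zs (k s) = 0 := by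
      intro s
      induction s with
      | zero => intro _; rw [hk0]; exact hi0
      | succ s ih =>
        intro hs
        have h1 := ih (Nat.le_of_succ_le hs)
        have h2 := hzero_prop (k s) h1 (k (s + 1))
        have h3 := hstep s (Nat.lt_of_succ_le hs)
        have h4 := (hzbar (k (s + 1))).1
        rcases eq_or_lt_of_le h4 with h | h
        · exact h.symm
        · exfalso
          nlinarith [mul_pos h3 h]
    rw [← hkr]
    exact hchain r le_rfl
  funext j
  exact hall j


/-- general properties of the higher-order SIWS model:
(i) `D̄` is positively invariant; (ii) `𝐃` is positively invariant;
(iii) the origin is an equilibrium and (given irreducibility of `B_f`) the only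
equilibrium on the boundary of `𝐃`. -/
theorem stmt0 (n m : ℕ) (hn : 0 < n)
    (Df Bf : Matrix (Fin (n + m)) (Fin (n + m)) ℝ)
    (Bfi : Fin (n + m) → Matrix (Fin (n + m)) (Fin (n + m)) ℝ)
    (hmod : ModelHyp n Df Bf Bfi) :
    (∀ z : ℝ → Fin (n + m) → ℝ, IsSolution (Gfield n Df Bf Bfi) z →
        z 0 ∈ Dbar n Df Bf Bfi → ∀ t : ℝ, 0 ≤ t → z t ∈ Dbar n Df Bf Bfi) ∧
    (∀ z : ℝ → Fin (n + m) → ℝ, IsSolution (Gfield n Df Bf Bfi) z →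
        z 0 ∈ Dint n Df Bf Bfi → ∀ t : ℝ, 0 ≤ t → z t ∈ Dint n Df Bf Bfi) ∧
    Gfield n Df Bf Bfi 0 = 0 ∧
    (Irred Bf → ∀ zs ∈ Dbar n Df Bf Bfi, zs ∉ Dint n Df Bf Bfi →
        Gfield n Df Bf Bfi zs = 0 → zs = 0) := by
  exact ⟨fun z hs h0 => dbar_invariant hmod z hs h0,
    fun z hs h0 => dint_invariant hmod z hs h0,
    Gfield_zero Df Bf Bfi,
    fun hirr zs hzbar hzni heq => boundary_equilibrium hmod hirr zs hzbar hzni heq⟩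
end
end

section
/- Define ũ ∈ ℝ^{n+m} by: ũ_i = 1 if i ≤ n and B_{fi} ≠ 0; ũ_{n+j} = w_{j,max} if B_{f,n+j} ≠ 0 (1 ≤ j ≤ m); and ũ_i = 0 whenever B_{fi} is the zero matrix. Suppose B_f is irreducible, ũ ≠ 0, and for every index i with ũ_i > 0 one has ((D_f⁻¹ B_f ũ)_i + (ũᵀ B_{fi} ũ)/(D_f)_{ii}) / ũ_i ≥ 4.5. Then the higher-order SIWS model has an equilibrium z* ∈ D̄ with z* ≥ (2/3)·ũ componentwise; in particular z*_i ≥ 2/3 for every i ≤ n with B_{fi} ≠ 0, and z*_{n+j} ≥ (2/3)·w_{j,max} for every j with B_{f,n+j} ≠ 0. -/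
open Matrix Filter Topology MeasureTheory

noncomputable section

section StmtFourAux

variable {N : ℕ}

/-- Monotonicity of a nonnegative quadratic form on nonnegative vectors. -/
lemma quad_mono_aux {M : Matrix (Fin N) (Fin N) ℝ} (hM : ∀ p q, 0 ≤ M p q)
    {z z' : Fin N → ℝ} (hz : ∀ i, 0 ≤ z i) (h : ∀ i, z i ≤ z' i) :
    z ⬝ᵥ M.mulVec z ≤ z' ⬝ᵥ M.mulVec z' := by
  unfold dotProduct Matrix.mulVec dotProduct
  refine Finset.sum_le_sum fun p _ => ?_
  have h1 : (0:ℝ) ≤ ∑ q, M p q * z q :=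
    Finset.sum_nonneg fun q _ => mul_nonneg (hM p q) (hz q)
  have h2 : ∑ q, M p q * z q ≤ ∑ q, M p q * z' q :=
    Finset.sum_le_sum fun q _ => mul_le_mul_of_nonneg_left (h q) (hM p q)
  exact mul_le_mul (h p) h2 h1 ((hz p).trans (h p))

lemma quad_nonneg_aux {M : Matrix (Fin N) (Fin N) ℝ} (hM : ∀ p q, 0 ≤ M p q)
    {z : Fin N → ℝ} (hz : ∀ i, 0 ≤ z i) : 0 ≤ z ⬝ᵥ M.mulVec z := by
  unfold dotProduct Matrix.mulVec dotProduct
  refine Finset.sum_nonneg fun p _ => mul_nonneg (hz p) ?_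
  exact Finset.sum_nonneg fun q _ => mul_nonneg (hM p q) (hz q)

lemma mulVec_mono_aux {M : Matrix (Fin N) (Fin N) ℝ} (hM : ∀ p q, 0 ≤ M p q)
    {z z' : Fin N → ℝ} (h : ∀ i, z i ≤ z' i) (i : Fin N) :
    M.mulVec z i ≤ M.mulVec z' i := by
  unfold Matrix.mulVec dotProduct
  exact Finset.sum_le_sum fun q _ => mul_le_mul_of_nonneg_left (h q) (hM i q)

lemma mulVec_nonneg_aux {M : Matrix (Fin N) (Fin N) ℝ} (hM : ∀ p q, 0 ≤ M p q)
    {z : Fin N → ℝ} (hz : ∀ i, 0 ≤ z i) (i : Fin N) : 0 ≤ M.mulVec z i := by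
  unfold Matrix.mulVec dotProduct
  exact Finset.sum_nonneg fun q _ => mul_nonneg (hM i q) (hz q)

lemma quad_smul_aux (M : Matrix (Fin N) (Fin N) ℝ) (c : ℝ) (v : Fin N → ℝ) :
    (c • v) ⬝ᵥ M.mulVec (c • v) = c ^ 2 * (v ⬝ᵥ M.mulVec v) := by
  rw [Matrix.mulVec_smul, smul_dotProduct, dotProduct_smul]
  simp only [smul_eq_mul]
  ring

lemma div_le_div_of_le_left0 {a b c : ℝ} (h : a ≤ b) (hc : 0 < c) : a / c ≤ b / c := by
  gcongr

end StmtFourAux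

/-- existence of an endemic equilibrium with high infection levels. -/
theorem stmt4 (n m : ℕ) (hn : 0 < n)
    (Df Bf : Matrix (Fin (n + m)) (Fin (n + m)) ℝ)
    (Bfi : Fin (n + m) → Matrix (Fin (n + m)) (Fin (n + m)) ℝ)
    (hmod : ModelHyp n Df Bf Bfi) (hirr : Irred Bf)
    (ut : Fin (n + m) → ℝ)
    (hut : ∀ i, (Bfi i = 0 → ut i = 0) ∧ (Bfi i ≠ 0 → ut i = ubound n Df Bf Bfi i))
    (hutne : ut ≠ 0)
    (htheta : ∀ i, 0 < ut i →
      4.5 ≤ (((Df⁻¹ * Bf).mulVec ut) i + (ut ⬝ᵥ (Bfi i).mulVec ut) / Df i i) / ut i) :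
    ∃ zs ∈ Dbar n Df Bf Bfi, Gfield n Df Bf Bfi zs = 0 ∧
      (∀ i, 2 / 3 * ut i ≤ zs i) ∧
      (∀ i : Fin (n + m), (i : ℕ) < n → Bfi i ≠ 0 → 2 / 3 ≤ zs i) ∧
      (∀ i : Fin (n + m), n ≤ (i : ℕ) → Bfi i ≠ 0 →
        2 / 3 * ubound n Df Bf Bfi i ≤ zs i) := by
  classical
  have hd : ∀ i, 0 < Df i i := hmod.dPos
  have hDfdiag : Df = Matrix.diagonal (fun i => Df i i) := by
    ext i j
    by_cases h : i = j
    · subst h; rw [Matrix.diagonal_apply_eq]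
    · rw [Matrix.diagonal_apply_ne _ h, hmod.dDiag i j h]
  have hDfinv : Df⁻¹ = Matrix.diagonal (fun i => (Df i i)⁻¹) := by
    apply Matrix.inv_eq_right_inv
    conv_lhs => rw [hDfdiag]
    rw [Matrix.diagonal_mul_diagonal]
    ext i j
    by_cases h : i = j
    · subst h
      simp [Matrix.one_apply_eq, mul_inv_cancel₀ (hd i).ne']
    · simp [Matrix.diagonal_apply_ne _ h, Matrix.one_apply_ne h]
  have hblt : ∀ i : Fin (n + m), (i : ℕ) < n → ubound n Df Bf Bfi i = 1 := by
    intro i hi; unfold ubound; simp [hi]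
  have hbge : ∀ i : Fin (n + m), n ≤ (i : ℕ) →
      ubound n Df Bf Bfi i = (∑ q, Bf i q + ∑ p, ∑ q, Bfi i p q) / Df i i := by
    intro i hi; unfold ubound; simp [Nat.not_lt.mpr hi]
  set f : (Fin (n + m) → ℝ) → Fin (n + m) → ℝ :=
    fun z => Bf.mulVec z + Hquad Bfi z with hfdef
  have hfapp : ∀ (z : Fin (n + m) → ℝ) i,
      f z i = Bf.mulVec z i + z ⬝ᵥ (Bfi i).mulVec z := fun z i => rfl
  have hf_nonneg : ∀ z : Fin (n + m) → ℝ, (∀ i, 0 ≤ z i) → ∀ i, 0 ≤ f z i := by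
    intro z hz i
    rw [hfapp]
    exact add_nonneg (mulVec_nonneg_aux hmod.bNonneg hz i)
      (quad_nonneg_aux (hmod.bfiNonneg i) hz)
  set T : (Fin (n + m) → ℝ) → Fin (n + m) → ℝ := fun z i =>
    if (i : ℕ) < n then f z i / (Df i i + f z i) else f z i / Df i i with hTdef
  have hTapp : ∀ (z : Fin (n + m) → ℝ) i,
      T z i = if (i : ℕ) < n then f z i / (Df i i + f z i) else f z i / Df i i :=
    fun z i => rfl
  set b : Fin (n + m) → ℝ := ubound n Df Bf Bfi with hbdef
  have hb0 : ∀ i, 0 ≤ b i := by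
    intro i
    by_cases hi : (i : ℕ) < n
    · rw [hblt i hi]; norm_num
    · rw [hbge i (Nat.le_of_not_lt hi)]
      exact div_nonneg (add_nonneg (Finset.sum_nonneg fun q _ => hmod.bNonneg i q)
        (Finset.sum_nonneg fun p _ => Finset.sum_nonneg fun q _ => hmod.bfiNonneg i p q))
        (hd i).le
  have hut_eq : ∀ i, ut i = 0 ∨ ut i = b i := by
    intro i
    by_cases h : Bfi i = 0
    · exact Or.inl ((hut i).1 h)
    · exact Or.inr ((hut i).2 h)
  have hut0 : ∀ i, 0 ≤ ut i := by
    intro i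
    rcases hut_eq i with h | h
    · rw [h]
    · rw [h]; exact hb0 i
  have hutb : ∀ i, ut i ≤ b i := by
    intro i
    rcases hut_eq i with h | h
    · rw [h]; exact hb0 i
    · rw [h]
  set a : Fin (n + m) → ℝ := fun i => 2 / 3 * ut i with hadef
  have haapp : ∀ i, a i = 2 / 3 * ut i := fun i => rfl
  have ha0 : ∀ i, 0 ≤ a i := fun i => by
    rw [haapp]; have := hut0 i; positivity
  have hab : a ≤ b := by
    intro i
    calc a i ≤ ut i := by rw [haapp]; nlinarith [hut0 i]
    _ ≤ b i := hutb i
  have hutpos : ∀ i, Bfi i ≠ 0 → 0 < ut i := by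
    intro i hne
    rw [(hut i).2 hne]
    by_cases hi : (i : ℕ) < n
    · rw [hblt i hi]; norm_num
    · rw [hbge i (Nat.le_of_not_lt hi)]
      apply div_pos _ (hd i)
      obtain ⟨p, q, hpq⟩ : ∃ p q, Bfi i p q ≠ 0 := by
        by_contra hc
        push_neg at hc
        exact hne (by ext p q; simp [hc])
      have hpq' : 0 < Bfi i p q := lt_of_le_of_ne (hmod.bfiNonneg i p q) (Ne.symm hpq)
      have h2 : 0 < ∑ p, ∑ q, Bfi i p q := by
        refine Finset.sum_pos'
          (fun p _ => Finset.sum_nonneg fun q _ => hmod.bfiNonneg i p q)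
          ⟨p, Finset.mem_univ p, ?_⟩
        exact Finset.sum_pos' (fun q _ => hmod.bfiNonneg i p q)
          ⟨q, Finset.mem_univ q, hpq'⟩
      have h1 : 0 ≤ ∑ q, Bf i q := Finset.sum_nonneg fun q _ => hmod.bNonneg i q
      linarith
  have hS : ∀ i, 0 < ut i →
      4.5 * ut i * Df i i ≤ Bf.mulVec ut i + ut ⬝ᵥ (Bfi i).mulVec ut := by
    intro i hpos
    have h := htheta i hpos
    have hA : ((Df⁻¹ * Bf).mulVec ut) i = Bf.mulVec ut i / Df i i := by
      rw [hDfinv, ← Matrix.mulVec_mulVec, Matrix.mulVec_diagonal, inv_mul_eq_div]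
    rw [hA, ← add_div, le_div_iff₀ hpos, le_div_iff₀ (hd i)] at h
    linarith
  have hlowkey : ∀ z : Fin (n + m) → ℝ, (∀ j, a j ≤ z j) → ∀ i, 0 < ut i →
      2 * ut i * Df i i ≤ f z i := by
    intro z hz i hpos
    have hSi := hS i hpos
    have hz0 : ∀ j, 0 ≤ z j := fun j => (ha0 j).trans (hz j)
    have haz : ∀ j, ((2 / 3 : ℝ) • ut) j ≤ z j := by
      intro j
      have := hz j
      rw [haapp] at this
      simpa [smul_eq_mul] using this
    have ha0' : ∀ j, 0 ≤ ((2 / 3 : ℝ) • ut) j := by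
      intro j
      have := hut0 j
      simp only [Pi.smul_apply, smul_eq_mul]
      positivity
    have h1 : Bf.mulVec ((2 / 3 : ℝ) • ut) i ≤ Bf.mulVec z i :=
      mulVec_mono_aux hmod.bNonneg haz i
    have h2 : ((2 / 3 : ℝ) • ut) ⬝ᵥ (Bfi i).mulVec ((2 / 3 : ℝ) • ut)
        ≤ z ⬝ᵥ (Bfi i).mulVec z :=
      quad_mono_aux (hmod.bfiNonneg i) ha0' haz
    have h1' : Bf.mulVec ((2 / 3 : ℝ) • ut) i = 2 / 3 * Bf.mulVec ut i := by
      rw [Matrix.mulVec_smul]; simp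
    have h2' := quad_smul_aux (Bfi i) (2 / 3) ut
    have hw0 : 0 ≤ Bf.mulVec ut i := mulVec_nonneg_aux hmod.bNonneg hut0 i
    rw [hfapp]
    rw [h1'] at h1
    rw [h2'] at h2
    nlinarith
  have hut1 : ∀ i : Fin (n + m), (i : ℕ) < n → Bfi i ≠ 0 → ut i = 1 := by
    intro i hi hne
    rw [(hut i).2 hne]
    exact hblt i hi
  have hmap : ∀ z ∈ Set.Icc a b, T z ∈ Set.Icc a b := by
    intro z hz
    have hz0 : ∀ i, 0 ≤ z i := fun i => (ha0 i).trans (hz.1 i)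
    have hfz0 : ∀ i, 0 ≤ f z i := hf_nonneg z hz0
    constructor
    · intro i
      show a i ≤ T z i
      rw [haapp, hTapp]
      by_cases hBfi : Bfi i = 0
      · have h0 : ut i = 0 := (hut i).1 hBfi
        rw [h0, mul_zero]
        split
        · exact div_nonneg (hfz0 i) (by linarith [hd i, hfz0 i])
        · exact div_nonneg (hfz0 i) (hd i).le
      · have hpos := hutpos i hBfi
        have hlow := hlowkey z (fun j => hz.1 j) i hpos
        split
        · rename_i hi
          have hui : ut i = 1 := hut1 i hi hBfi
          rw [hui] at hlow ⊢
          rw [le_div_iff₀ (by linarith [hd i, hfz0 i] : (0:ℝ) < Df i i + f z i)]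
          nlinarith [hd i, hfz0 i]
        · rw [le_div_iff₀ (hd i)]
          nlinarith [hd i, hut0 i]
    · intro i
      show T z i ≤ b i
      rw [hTapp]
      split
      · rename_i hi
        rw [hblt i hi, div_le_one (by linarith [hd i, hfz0 i] : (0:ℝ) < Df i i + f z i)]
        linarith [hd i]
      · rename_i hi
        rw [Nat.not_lt] at hi
        rw [hbge i hi]
        have hzle1 : ∀ j : Fin (n + m), (j : ℕ) < n → z j ≤ 1 := by
          intro j hj
          have h2 := hz.2 j
          rw [show b j = 1 from hblt j hj] at h2
          exact h2
        have hB : Bf.mulVec z i ≤ ∑ q, Bf i q := by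
          unfold Matrix.mulVec dotProduct
          apply Finset.sum_le_sum
          intro q _
          by_cases hq : (q : ℕ) < n
          · nlinarith [hmod.bNonneg i q, hzle1 q hq, hz0 q]
          · have h0 : Bf i q = 0 := hmod.bBlock i q hi (Nat.le_of_not_lt hq)
            simp [h0]
        have hH : z ⬝ᵥ (Bfi i).mulVec z ≤ ∑ p, ∑ q, Bfi i p q := by
          unfold dotProduct Matrix.mulVec dotProduct
          apply Finset.sum_le_sum
          intro p _
          by_cases hp : (p : ℕ) < n
          · have hin : ∑ q, Bfi i p q * z q ≤ ∑ q, Bfi i p q := by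
              apply Finset.sum_le_sum
              intro q _
              by_cases hq : (q : ℕ) < n
              · nlinarith [hmod.bfiNonneg i p q, hzle1 q hq, hz0 q]
              · rw [hmod.bfiBlock2 i hi p q (by tauto)]; simp
            have hsnn : (0:ℝ) ≤ ∑ q, Bfi i p q * z q :=
              Finset.sum_nonneg fun q _ => mul_nonneg (hmod.bfiNonneg i p q) (hz0 q)
            calc z p * ∑ q, Bfi i p q * z q ≤ 1 * ∑ q, Bfi i p q :=
                  mul_le_mul (hzle1 p hp) hin hsnn one_pos.le
              _ = ∑ q, Bfi i p q := one_mul _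
          · have hzero : ∀ q, Bfi i p q = 0 := fun q =>
              hmod.bfiBlock2 i hi p q (by tauto)
            simp [hzero]
        have hfle : f z i ≤ ∑ q, Bf i q + ∑ p, ∑ q, Bfi i p q := by
          rw [hfapp]; linarith
        exact div_le_div_of_le_left0 hfle (hd i)
  have hTmono : ∀ z z' : Fin (n + m) → ℝ, (∀ j, 0 ≤ z j) → (∀ j, z j ≤ z' j) →
      ∀ i, T z i ≤ T z' i := by
    intro z z' hz0 hle i
    have hf1 : f z i ≤ f z' i := by
      rw [hfapp, hfapp]
      exact add_le_add (mulVec_mono_aux hmod.bNonneg hle i)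
        (quad_mono_aux (hmod.bfiNonneg i) hz0 hle)
    have hf0 : 0 ≤ f z i := hf_nonneg z hz0 i
    have hf0' : 0 ≤ f z' i := hf0.trans hf1
    rw [hTapp, hTapp]
    split
    · rw [div_le_div_iff₀ (by linarith [hd i] : (0:ℝ) < Df i i + f z i)
        (by linarith [hd i] : (0:ℝ) < Df i i + f z' i)]
      nlinarith [hd i]
    · exact div_le_div_of_le_left0 hf1 (hd i)
  haveI : Fact (a ≤ b) := ⟨hab⟩
  let T' : Set.Icc a b →o Set.Icc a b :=
    ⟨fun z => ⟨T z.1, hmap z.1 z.2⟩, by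
      intro x y hxy
      have hx0 : ∀ j, 0 ≤ x.1 j := fun j => (ha0 j).trans (x.2.1 j)
      exact fun i => hTmono x.1 y.1 hx0 (fun j => hxy j) i⟩
  have hfix : T' (OrderHom.lfp T') = OrderHom.lfp T' := OrderHom.map_lfp T'
  set zs : Fin (n + m) → ℝ := (OrderHom.lfp T').1 with hzs
  have hzsmem : zs ∈ Set.Icc a b := (OrderHom.lfp T').2
  have hTz : ∀ i, T zs i = zs i := fun i => congrFun (congrArg Subtype.val hfix) i
  have hzs0 : ∀ i, 0 ≤ zs i := fun i => (ha0 i).trans (hzsmem.1 i)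
  have hfzs0 : ∀ i, 0 ≤ f zs i := hf_nonneg zs hzs0
  refine ⟨zs, ?_, ?_, ?_, ?_, ?_⟩
  · intro i
    exact ⟨hzs0 i, hzsmem.2 i⟩
  · funext i
    have hGf : Gfield n Df Bf Bfi zs i =
        -(Df i i * zs i) + (1 - (if (i : ℕ) < n then zs i else 0)) * f zs i := by
      unfold Gfield
      simp only [Pi.add_apply, Pi.neg_apply]
      congr 1
      · congr 1
        conv_lhs => rw [hDfdiag]
        rw [Matrix.mulVec_diagonal]
      · rw [Matrix.sub_mulVec, Matrix.one_mulVec]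
        unfold Zmat
        rw [Pi.sub_apply, Matrix.mulVec_diagonal]
        have hfe : (Bf.mulVec zs + Hquad Bfi zs) = f zs := rfl
        rw [hfe]
        ring
    rw [Pi.zero_apply, hGf]
    have hTzi := hTz i
    rw [hTapp] at hTzi
    by_cases hi : (i : ℕ) < n
    · simp only [hi, if_true] at hTzi ⊢
      have hpos : (0:ℝ) < Df i i + f zs i := by linarith [hd i, hfzs0 i]
      have heq : zs i * (Df i i + f zs i) = f zs i := by
        rw [← hTzi, div_mul_cancel₀ _ (ne_of_gt hpos)]
      nlinarith
    · simp only [hi, if_false] at hTzi ⊢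
      have heq : zs i * Df i i = f zs i := by
        rw [← hTzi, div_mul_cancel₀ _ (hd i).ne']
      nlinarith [hd i]
  · intro i
    have := hzsmem.1 i
    rw [haapp] at this
    exact this
  · intro i hi hne
    have h1 := hzsmem.1 i
    rw [haapp, hut1 i hi hne] at h1
    linarith
  · intro i hi hne
    have h1 := hzsmem.1 i
    rw [haapp, (hut i).2 hne] at h1
    exact h1
end
end

section
/- Suppose B_f is irreducible and ρ(D_f⁻¹ B_f) > 1. Then the higher-order SIWS model has an equilibrium z* ∈ D̄ with z* ≫ 0 (every component strictly positive). -/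
open Matrix Filter Topology MeasureTheory

noncomputable section

/-- `f(z)_i = (B_f z)_i + H(z)_i`. -/
def fAux {N : ℕ} (Bf : Matrix (Fin N) (Fin N) ℝ)
    (Bfi : Fin N → Matrix (Fin N) (Fin N) ℝ) (z : Fin N → ℝ) (i : Fin N) : ℝ :=
  Bf.mulVec z i + Hquad Bfi z i

/-- The monotone map whose fixed points are equilibria. -/
def TAux (n : ℕ) {N : ℕ} (Df Bf : Matrix (Fin N) (Fin N) ℝ)
    (Bfi : Fin N → Matrix (Fin N) (Fin N) ℝ) (z : Fin N → ℝ) (i : Fin N) : ℝ :=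
  if (i : ℕ) < n then fAux Bf Bfi z i / (Df i i + fAux Bf Bfi z i)
  else fAux Bf Bfi z i / Df i i

lemma fAux_expand {N : ℕ} (Bf : Matrix (Fin N) (Fin N) ℝ)
    (Bfi : Fin N → Matrix (Fin N) (Fin N) ℝ) (z : Fin N → ℝ) (i : Fin N) :
    fAux Bf Bfi z i = (∑ q, Bf i q * z q) + ∑ p, ∑ q, z p * (Bfi i p q * z q) := by
  simp [fAux, Matrix.mulVec, dotProduct, Hquad, Finset.mul_sum]

lemma exists_eig {N : ℕ} (hN : 0 < N) (M : Matrix (Fin N) (Fin N) ℝ)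
    (h : 1 < specRad M) :
    ∃ (μ : ℂ) (v : Fin N → ℂ), 1 < ‖μ‖ ∧ v ≠ 0 ∧
      (M.map (fun x : ℝ => (x : ℂ))).mulVec v = μ • v := by
  set Mc := M.map (fun x : ℝ => (x : ℂ)) with hMc
  have hne : Mc.charpoly ≠ 0 := Mc.charpoly_monic.ne_zero
  have hdeg : Mc.charpoly.natDegree = N := by
    simpa using Mc.charpoly_natDegree_eq_dim
  have hfin : {x : ℂ | Mc.charpoly.IsRoot x}.Finite := Polynomial.finite_setOf_isRoot hne
  have hSeq : {r : ℝ | ∃ μ : ℂ, Mc.charpoly.IsRoot μ ∧ r = ‖μ‖}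
      = (fun x : ℂ => ‖x‖) '' {x : ℂ | Mc.charpoly.IsRoot x} := by
    ext r
    simp only [Set.mem_setOf_eq, Set.mem_image]
    exact ⟨fun ⟨μ, h1, h2⟩ => ⟨μ, h1, h2.symm⟩, fun ⟨μ, h1, h2⟩ => ⟨μ, h1, h2.symm⟩⟩
  have hSfin : ({r : ℝ | ∃ μ : ℂ, Mc.charpoly.IsRoot μ ∧ r = ‖μ‖}).Finite := by
    rw [hSeq]; exact hfin.image _
  have hdegpos : 0 < Mc.charpoly.degree := by
    rw [Polynomial.degree_eq_natDegree hne, hdeg]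
    exact_mod_cast hN
  obtain ⟨x, hx⟩ := Complex.exists_root hdegpos
  have hmem := Set.Nonempty.csSup_mem
    (s := {r : ℝ | ∃ μ : ℂ, Mc.charpoly.IsRoot μ ∧ r = ‖μ‖})
    ⟨‖x‖, ⟨x, hx, rfl⟩⟩ hSfin
  rw [specRad] at h
  obtain ⟨μ, hroot, habs⟩ := hmem
  have hμ : 1 < ‖μ‖ := by rw [← habs]; exact h
  have hdet : ((μ • (1 : Matrix (Fin N) (Fin N) ℂ)) - Mc).det = 0 := by
    have h1 := RingHom.map_det (Polynomial.evalRingHom μ) (charmatrix Mc)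
    have hmap : (charmatrix Mc).map (Polynomial.evalRingHom μ)
        = μ • (1 : Matrix (Fin N) (Fin N) ℂ) - Mc := by
      ext i j
      by_cases hij : i = j
      · subst hij
        simp [Matrix.map_apply, Matrix.smul_apply, Matrix.one_apply]
      · simp [Matrix.map_apply, charmatrix_apply_ne _ _ _ hij, Matrix.smul_apply,
          Matrix.one_apply_ne hij]
    rw [RingHom.mapMatrix_apply] at h1
    rw [hmap] at h1
    rw [← h1]
    simpa [Matrix.charpoly] using hroot
  obtain ⟨v, hv0, hv⟩ := Matrix.exists_mulVec_eq_zero_iff.mpr hdet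
  refine ⟨μ, v, hμ, hv0, ?_⟩
  rw [Matrix.sub_mulVec, Matrix.smul_mulVec, Matrix.one_mulVec, sub_eq_zero] at hv
  exact hv.symm

/-- if `ρ(D_f⁻¹ B_f) > 1` there exists a strictly positive endemic
equilibrium. -/
theorem stmt6 (n m : ℕ) (hn : 0 < n)
    (Df Bf : Matrix (Fin (n + m)) (Fin (n + m)) ℝ)
    (Bfi : Fin (n + m) → Matrix (Fin (n + m)) (Fin (n + m)) ℝ)
    (hmod : ModelHyp n Df Bf Bfi) (hirr : Irred Bf)
    (hrho : 1 < specRad (Df⁻¹ * Bf)) :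
    ∃ zs ∈ Dbar n Df Bf Bfi, Gfield n Df Bf Bfi zs = 0 ∧ ∀ i, 0 < zs i := by
  classical
  obtain ⟨dDiag, dPos, bNonneg, bBlock, bfiNonneg, bfiBlock1, bfiBlock2⟩ := hmod
  have hN : 0 < n + m := Nat.lt_of_lt_of_le hn (Nat.le_add_right n m)
  have hDf : Df = Matrix.diagonal (fun i => Df i i) := by
    ext i j
    rcases eq_or_ne i j with rfl | hij
    · simp
    · rw [Matrix.diagonal_apply_ne _ hij]; exact dDiag i j hij
  have hdet : IsUnit Df.det := by
    rw [hDf, Matrix.det_diagonal]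
    exact (Finset.prod_pos fun i _ => dPos i).ne'.isUnit
  have hDfA : Df * (Df⁻¹ * Bf) = Bf := by
    rw [← mul_assoc, Matrix.mul_nonsing_inv _ hdet, one_mul]
  obtain ⟨μ, v, hμ, hv0, heig⟩ := exists_eig hN _ hrho
  set lam := ‖μ‖ with hlamdef
  set u : Fin (n + m) → ℝ := fun i => ‖v i‖ with hudef
  have hlam0 : (0:ℝ) < lam := lt_trans one_pos hμ
  have hu0 : ∀ i, 0 ≤ u i := fun i => norm_nonneg _
  have hupos : ∃ i, 0 < u i := by
    obtain ⟨i, hi⟩ := Function.ne_iff.mp hv0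
    exact ⟨i, by simpa [hudef] using norm_pos_iff.mpr hi⟩
  -- key Perron-type inequality
  have key : ∀ i, lam * (Df i i * u i) ≤ Bf.mulVec u i := by
    intro i
    have hBc : (Bf.map fun x : ℝ => (x : ℂ)) *ᵥ v = fun j => (Df j j : ℂ) * (μ * v j) := by
      have h2 : (Bf.map fun x : ℝ => (x : ℂ))
          = (Df.map fun x : ℝ => (x : ℂ)) * ((Df⁻¹ * Bf).map fun x : ℝ => (x : ℂ)) := by
        rw [show (fun x : ℝ => (x : ℂ)) = ⇑Complex.ofRealHom from rfl, ← Matrix.map_mul, hDfA]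
      funext j
      rw [h2, ← Matrix.mulVec_mulVec, heig]
      have hDfc : (Df.map fun x : ℝ => (x : ℂ))
          = Matrix.diagonal (fun i => (Df i i : ℂ)) := by
        rw [hDf, Matrix.diagonal_map Complex.ofReal_zero]
        simp
      rw [hDfc, Matrix.mulVec_diagonal]
      simp
    have habs1 : ‖((Bf.map fun x : ℝ => (x : ℂ)) *ᵥ v) i‖
        = Df i i * (lam * u i) := by
      rw [hBc]
      simp only [norm_mul, Complex.norm_real, Real.norm_eq_abs, abs_of_nonneg (dPos i).le,
        hudef, hlamdef]
    have h3 : ‖((Bf.map fun x : ℝ => (x : ℂ)) *ᵥ v) i‖ ≤ Bf.mulVec u i := by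
      have hlhs : ((Bf.map fun x : ℝ => (x : ℂ)) *ᵥ v) i = ∑ q, (Bf i q : ℂ) * v q := by
        simp [Matrix.mulVec, dotProduct, Matrix.map_apply]
      rw [hlhs]
      refine le_trans (norm_sum_le _ _) ?_
      rw [show Bf.mulVec u i = ∑ q, Bf i q * u q from rfl]
      refine Finset.sum_le_sum fun q _ => ?_
      rw [norm_mul, Complex.norm_real, Real.norm_eq_abs, abs_of_nonneg (bNonneg i q)]
    rw [habs1] at h3
    linarith
  -- properties of fAux
  have hfnn : ∀ z : Fin (n + m) → ℝ, (∀ j, 0 ≤ z j) → ∀ i, 0 ≤ fAux Bf Bfi z i := by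
    intro z hz i
    rw [fAux_expand]
    refine add_nonneg (Finset.sum_nonneg fun q _ => mul_nonneg (bNonneg i q) (hz q))
      (Finset.sum_nonneg fun p _ => Finset.sum_nonneg fun q _ =>
        mul_nonneg (hz p) (mul_nonneg (bfiNonneg i p q) (hz q)))
  have hfmono : ∀ z z' : Fin (n + m) → ℝ, (∀ j, 0 ≤ z j) → (∀ j, z j ≤ z' j) →
      ∀ i, fAux Bf Bfi z i ≤ fAux Bf Bfi z' i := by
    intro z z' hz hzz i
    rw [fAux_expand, fAux_expand]
    refine add_le_add (Finset.sum_le_sum fun q _ =>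
        mul_le_mul_of_nonneg_left (hzz q) (bNonneg i q))
      (Finset.sum_le_sum fun p _ => Finset.sum_le_sum fun q _ => ?_)
    exact mul_le_mul (hzz p) (mul_le_mul_of_nonneg_left (hzz q) (bfiNonneg i p q))
      (mul_nonneg (bfiNonneg i p q) (hz q)) (le_trans (hz p) (hzz p))
  -- the upper bound vector
  set w := ubound n Df Bf Bfi with hwdef
  have hwn : ∀ i : Fin (n + m), (i : ℕ) < n → w i = 1 := by
    intro i h; simp [hwdef, ubound, h]
  have hwm : ∀ i : Fin (n + m), ¬ (i : ℕ) < n →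
      w i = (∑ q, Bf i q + ∑ p, ∑ q, Bfi i p q) / Df i i := by
    intro i h; simp [hwdef, ubound, h]
  have hw0 : ∀ i, 0 ≤ w i := by
    intro i
    by_cases h : (i : ℕ) < n
    · rw [hwn i h]; norm_num
    · rw [hwm i h]
      refine div_nonneg (add_nonneg (Finset.sum_nonneg fun q _ => bNonneg i q)
        (Finset.sum_nonneg fun p _ => Finset.sum_nonneg fun q _ => bfiNonneg i p q)) (dPos i).le
  -- properties of TAux
  have hT0 : ∀ z : Fin (n + m) → ℝ, (∀ j, 0 ≤ z j) → ∀ i, 0 ≤ TAux n Df Bf Bfi z i := by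
    intro z hz i
    have h1 := hfnn z hz i
    by_cases h : (i : ℕ) < n
    · rw [TAux, if_pos h]
      exact div_nonneg h1 (by linarith [dPos i])
    · rw [TAux, if_neg h]
      exact div_nonneg h1 (dPos i).le
  have hTmono : ∀ z z' : Fin (n + m) → ℝ, (∀ j, 0 ≤ z j) → (∀ j, z j ≤ z' j) →
      ∀ i, TAux n Df Bf Bfi z i ≤ TAux n Df Bf Bfi z' i := by
    intro z z' hz hzz i
    have h1 := hfnn z hz i
    have hle := hfmono z z' hz hzz i
    by_cases h : (i : ℕ) < n
    · rw [TAux, TAux, if_pos h, if_pos h]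
      rw [div_le_div_iff₀ (by linarith [dPos i]) (by linarith [dPos i])]
      nlinarith [dPos i]
    · rw [TAux, TAux, if_neg h, if_neg h]
      exact (div_le_div_iff_of_pos_right (dPos i)).mpr hle
  have hTw : ∀ i, TAux n Df Bf Bfi w i ≤ w i := by
    intro i
    have h1 := hfnn w hw0 i
    by_cases h : (i : ℕ) < n
    · rw [hwn i h, TAux, if_pos h, div_le_one (by linarith [dPos i])]
      linarith [dPos i]
    · rw [TAux, if_neg h, hwm i h]
      have hb : fAux Bf Bfi w i ≤ ∑ q, Bf i q + ∑ p, ∑ q, Bfi i p q := by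
        rw [fAux_expand]
        refine add_le_add (Finset.sum_le_sum fun q _ => ?_)
          (Finset.sum_le_sum fun p _ => Finset.sum_le_sum fun q _ => ?_)
        · by_cases hq : (q : ℕ) < n
          · rw [hwn q hq, mul_one]
          · rw [bBlock i q (le_of_not_gt h) (le_of_not_gt hq), zero_mul]
        · by_cases hpq : (p : ℕ) < n ∧ (q : ℕ) < n
          · rw [hwn p hpq.1, hwn q hpq.2, one_mul, mul_one]
          · rw [bfiBlock2 i (le_of_not_gt h) p q hpq]
            simp
      exact (div_le_div_iff_of_pos_right (dPos i)).mpr hb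
  -- positivity of the upper bound where u is positive
  have hwpos : ∀ i, 0 < u i → 0 < w i := by
    intro i hui
    by_cases h : (i : ℕ) < n
    · rw [hwn i h]; norm_num
    · rw [hwm i h]
      refine div_pos ?_ (dPos i)
      have h1 : 0 < Bf.mulVec u i :=
        lt_of_lt_of_le (mul_pos hlam0 (mul_pos (dPos i) hui)) (key i)
      have h2 : 0 < ∑ q, Bf i q := by
        by_contra hc
        have hz : ∀ q ∈ Finset.univ, Bf i q = 0 := by
          intro q hq
          have := (Finset.sum_eq_zero_iff_of_nonneg (fun x _ => bNonneg i x)).mp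
            (le_antisymm (not_lt.mp hc) (Finset.sum_nonneg fun x _ => bNonneg i x))
          exact this q hq
        have : Bf.mulVec u i = 0 := by
          rw [show Bf.mulVec u i = ∑ q, Bf i q * u q from rfl]
          exact Finset.sum_eq_zero fun q hq => by rw [hz q hq, zero_mul]
        linarith
      exact add_pos_of_pos_of_nonneg h2
        (Finset.sum_nonneg fun p _ => Finset.sum_nonneg fun q _ => bfiNonneg i p q)
  have hgap : (0:ℝ) < 1 - 1 / lam := by
    rw [sub_pos, div_lt_one hlam0]; exact hμ
  -- choice of ε
  set g : Fin (n + m) → ℝ :=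
    fun i => if 0 < u i then min (w i) (1 - 1 / lam) / u i else 1 with hgdef
  have hgpos : ∀ i, 0 < g i := by
    intro i
    by_cases h : 0 < u i
    · simp only [hgdef, if_pos h]
      exact div_pos (lt_min (hwpos i h) hgap) h
    · simp only [hgdef, if_neg h]; norm_num
  have hune : (Finset.univ : Finset (Fin (n + m))).Nonempty :=
    Finset.univ_nonempty_iff.mpr ⟨⟨0, hN⟩⟩
  set ε := Finset.univ.inf' hune g with hεdef
  have hεpos : 0 < ε :=
    (Finset.lt_inf'_iff hune).mpr fun i _ => hgpos i
  have hεg : ∀ i, ε ≤ g i := fun i => Finset.inf'_le g (Finset.mem_univ i)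
  have hεmin : ∀ i, 0 < u i → ε * u i ≤ min (w i) (1 - 1 / lam) := by
    intro i h
    have h1 := hεg i
    rw [hgdef] at h1
    simp only [if_pos h] at h1
    exact (le_div_iff₀ h).mp h1
  have hεw : ∀ i, ε * u i ≤ w i := by
    intro i
    by_cases h : 0 < u i
    · exact le_trans (hεmin i h) (min_le_left _ _)
    · rw [le_antisymm (not_lt.mp h) (hu0 i), mul_zero]
      exact hw0 i
  have hεlam : ∀ i, ε * u i ≤ 1 - 1 / lam := by
    intro i
    by_cases h : 0 < u i
    · exact le_trans (hεmin i h) (min_le_right _ _)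
    · rw [le_antisymm (not_lt.mp h) (hu0 i), mul_zero]
      exact hgap.le
  -- the subsolution
  set l : Fin (n + m) → ℝ := fun i => ε * u i with hldef
  have hl0 : ∀ i, 0 ≤ l i := fun i => mul_nonneg hεpos.le (hu0 i)
  have hlw : ∀ i, l i ≤ w i := fun i => hεw i
  have hflb : ∀ i, lam * (Df i i * l i) ≤ fAux Bf Bfi l i := by
    intro i
    have h1 : Bf.mulVec l i = ε * Bf.mulVec u i := by
      have hsm : l = ε • u := by funext j; simp [hldef]
      rw [hsm, Matrix.mulVec_smul]
      simp
    have h2 : 0 ≤ Hquad Bfi l i := by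
      rw [show Hquad Bfi l i = ∑ p, l p * ∑ q, Bfi i p q * l q from rfl]
      exact Finset.sum_nonneg fun p _ => mul_nonneg (hl0 p)
        (Finset.sum_nonneg fun q _ => mul_nonneg (bfiNonneg i p q) (hl0 q))
    have h4 : ε * (lam * (Df i i * u i)) ≤ ε * Bf.mulVec u i :=
      mul_le_mul_of_nonneg_left (key i) hεpos.le
    have h5 : fAux Bf Bfi l i = Bf.mulVec l i + Hquad Bfi l i := rfl
    rw [h5, h1]
    have : lam * (Df i i * l i) = ε * (lam * (Df i i * u i)) := by
      simp only [hldef]; ring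
    linarith
  have hTl : ∀ i, l i ≤ TAux n Df Bf Bfi l i := by
    intro i
    rcases eq_or_lt_of_le (hu0 i) with h0 | hui
    · have hli : l i = 0 := by simp [hldef, ← h0]
      rw [hli]
      exact hT0 l hl0 i
    · have hF0 : 0 ≤ fAux Bf Bfi l i := hfnn l hl0 i
      have hFl := hflb i
      have hlipos : 0 < l i := mul_pos hεpos hui
      by_cases h : (i : ℕ) < n
      · rw [TAux, if_pos h, le_div_iff₀ (by linarith [dPos i])]
        have hla : 1 / lam ≤ 1 - l i := by
          have := hεlam i
          simp only [hldef] at *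
          linarith
        have h3 : lam * (Df i i * l i) * (1 / lam) ≤ fAux Bf Bfi l i * (1 - l i) :=
          mul_le_mul hFl hla (by positivity) hF0
        have h4 : lam * (Df i i * l i) * (1 / lam) = Df i i * l i := by
          field_simp
        nlinarith
      · rw [TAux, if_neg h, le_div_iff₀ (dPos i)]
        have h6 : 0 ≤ (lam - 1) * (Df i i * l i) :=
          mul_nonneg (by linarith) (mul_nonneg (dPos i).le (hl0 i))
        nlinarith
  -- Knaster–Tarski: the set of subsolutions
  set S : Set (Fin (n + m) → ℝ) :=
    {z | (∀ i, l i ≤ z i ∧ z i ≤ w i) ∧ ∀ i, z i ≤ TAux n Df Bf Bfi z i} with hSdef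
  have hlS : l ∈ S := ⟨fun i => ⟨le_refl _, hlw i⟩, hTl⟩
  have hbdd : ∀ i, BddAbove ((fun z : Fin (n + m) → ℝ => z i) '' S) := by
    intro i
    refine ⟨w i, ?_⟩
    rintro _ ⟨z, hz, rfl⟩
    exact (hz.1 i).2
  set zs : Fin (n + m) → ℝ := fun i => sSup ((fun z : Fin (n + m) → ℝ => z i) '' S)
    with hzsdef
  have hSne : ∀ i, ((fun z : Fin (n + m) → ℝ => z i) '' S).Nonempty :=
    fun i => ⟨l i, ⟨l, hlS, rfl⟩⟩
  have hub : ∀ z ∈ S, ∀ i, z i ≤ zs i :=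
    fun z hz i => le_csSup (hbdd i) ⟨z, hz, rfl⟩
  have hlzs : ∀ i, l i ≤ zs i := hub l hlS
  have hzs0 : ∀ i, 0 ≤ zs i := fun i => le_trans (hl0 i) (hlzs i)
  have hzsw : ∀ i, zs i ≤ w i := by
    intro i
    refine csSup_le (hSne i) ?_
    rintro _ ⟨z, hz, rfl⟩
    exact (hz.1 i).2
  have hzsT : ∀ i, zs i ≤ TAux n Df Bf Bfi zs i := by
    intro i
    refine csSup_le (hSne i) ?_
    rintro _ ⟨z, hz, rfl⟩
    exact le_trans (hz.2 i)
      (hTmono z zs (fun j => le_trans (hl0 j) (hz.1 j).1) (fun j => hub z hz j) i)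
  have hTzsS : TAux n Df Bf Bfi zs ∈ S := by
    refine ⟨fun i => ⟨?_, ?_⟩, fun i => hTmono zs _ hzs0 hzsT i⟩
    · exact le_trans (hTl i) (hTmono l zs hl0 hlzs i)
    · exact le_trans (hTmono zs w hzs0 hzsw i) (hTw i)
  have hfix : ∀ i, TAux n Df Bf Bfi zs i = zs i :=
    fun i => le_antisymm (hub _ hTzsS i) (hzsT i)
  -- the fixed point is an equilibrium
  have hGz : Gfield n Df Bf Bfi zs = 0 := by
    funext i
    have hF0 : 0 ≤ fAux Bf Bfi zs i := hfnn zs hzs0 i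
    have hGi : Gfield n Df Bf Bfi zs i
        = -(Df i i * zs i) + (1 - (if (i : ℕ) < n then zs i else 0)) * fAux Bf Bfi zs i := by
      have hDzs : Df.mulVec zs i = Df i i * zs i := by
        rw [hDf, Matrix.mulVec_diagonal]; simp
      simp only [Gfield, Pi.add_apply, Pi.neg_apply, Matrix.sub_mulVec, Matrix.one_mulVec,
        Pi.sub_apply, Zmat, Matrix.mulVec_diagonal, fAux, hDzs]
      ring
    rw [hGi, Pi.zero_apply]
    have hfx := hfix i
    by_cases h : (i : ℕ) < n
    · rw [if_pos h]
      rw [TAux, if_pos h] at hfx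
      have hdpos : (0:ℝ) < Df i i + fAux Bf Bfi zs i := by linarith [dPos i]
      have h2 : fAux Bf Bfi zs i = zs i * (Df i i + fAux Bf Bfi zs i) :=
        (div_eq_iff hdpos.ne').mp hfx
      linear_combination h2
    · rw [if_neg h]
      rw [TAux, if_neg h] at hfx
      have h2 : fAux Bf Bfi zs i = zs i * Df i i := (div_eq_iff (dPos i).ne').mp hfx
      linear_combination h2
  -- strict positivity via irreducibility
  have hprop : ∀ p q : Fin (n + m), zs p = 0 → 0 < Bf p q → zs q = 0 := by
    intro p q hp hB
    have hF0 : 0 ≤ fAux Bf Bfi zs p := hfnn zs hzs0 p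
    have hfx := hfix p
    have hFzero : fAux Bf Bfi zs p = 0 := by
      by_cases h : (p : ℕ) < n
      · rw [TAux, if_pos h, hp] at hfx
        rcases div_eq_zero_iff.mp hfx with h1 | h1
        · exact h1
        · linarith [dPos p]
      · rw [TAux, if_neg h, hp] at hfx
        rcases div_eq_zero_iff.mp hfx with h1 | h1
        · exact h1
        · linarith [dPos p]
    have hq1 : 0 ≤ ∑ q', Bf p q' * zs q' :=
      Finset.sum_nonneg fun x _ => mul_nonneg (bNonneg p x) (hzs0 x)
    have hq2 : 0 ≤ ∑ p', ∑ q', zs p' * (Bfi p p' q' * zs q') :=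
      Finset.sum_nonneg fun x _ => Finset.sum_nonneg fun y _ =>
        mul_nonneg (hzs0 x) (mul_nonneg (bfiNonneg p x y) (hzs0 y))
    have hsum : (∑ q', Bf p q' * zs q') = 0 := by
      have := hFzero
      rw [fAux_expand] at this
      linarith
    have hterm : Bf p q * zs q = 0 :=
      (Finset.sum_eq_zero_iff_of_nonneg fun x _ =>
        mul_nonneg (bNonneg p x) (hzs0 x)).mp hsum q (Finset.mem_univ q)
    rcases mul_eq_zero.mp hterm with h1 | h1
    · exact absurd h1 hB.ne'
    · exact h1
  obtain ⟨i0, hi0⟩ := hupos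
  have hzi0 : 0 < zs i0 := lt_of_lt_of_le (mul_pos hεpos hi0) (hlzs i0)
  refine ⟨zs, ?_, hGz, ?_⟩
  · simp only [Dbar, Set.mem_setOf_eq, ← hwdef]
    exact fun i => ⟨hzs0 i, hzsw i⟩
  · intro j
    by_contra hj
    have hj0 : zs j = 0 := le_antisymm (not_lt.mp hj) (hzs0 j)
    have hne : j ≠ i0 := fun h => by rw [← h, hj0] at hzi0; exact lt_irrefl 0 hzi0
    obtain ⟨r, k, hk0, hkr, hkpos⟩ := hirr j i0 hne
    have hchain : ∀ s, s ≤ r → zs (k s) = 0 := by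
      intro s
      induction s with
      | zero => intro _; rw [hk0]; exact hj0
      | succ s ih =>
        intro hs
        exact hprop (k s) (k (s + 1)) (ih (Nat.le_of_succ_le hs))
          (hkpos s (Nat.lt_of_succ_le hs))
    have hfin := hchain r le_rfl
    rw [hkr] at hfin
    rw [hfin] at hzi0
    exact lt_irrefl 0 hzi0
end
end

section
/- Suppose B_f is irreducible. Then for every z ∈ 𝐃 the Jacobian matrix J(z) of the vector field G at z is an irreducible Metzler matrix: every off-diagonal entry of J(z) is nonnegative, and the directed graph on {1,…,n+m} with an edge from i to j whenever i ≠ j and J(z)_{ij} > 0 is strongly connected. (In particular, the higher-order SIWS model is an irreducible monotone system on 𝐃.) -/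
open Matrix Filter Topology MeasureTheory

noncomputable section

lemma Gfield_apply (n : ℕ) {N : ℕ} (Df Bf : Matrix (Fin N) (Fin N) ℝ)
    (Bfi : Fin N → Matrix (Fin N) (Fin N) ℝ) (z : Fin N → ℝ) (i : Fin N) :
    Gfield n Df Bf Bfi z i =
      -(∑ j, Df i j * z j) + (1 - (if (i : ℕ) < n then z i else 0)) *
        ((∑ j, Bf i j * z j) + ∑ p, ∑ q, z p * (Bfi i p q * z q)) := by
  have h1 : (1 - Zmat n z : Matrix (Fin N) (Fin N) ℝ)
      = Matrix.diagonal (fun p : Fin N => 1 - (if (p : ℕ) < n then z p else 0)) := by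
    rw [Zmat, ← Matrix.diagonal_one, ← Matrix.diagonal_sub]
  rw [Gfield, h1]
  simp only [Pi.add_apply, Pi.neg_apply, Matrix.mulVec_diagonal]
  simp [Matrix.mulVec, dotProduct, Hquad, Finset.mul_sum, mul_assoc]


lemma hasfd (n : ℕ) {N : ℕ} (Df Bf : Matrix (Fin N) (Fin N) ℝ)
    (Bfi : Fin N → Matrix (Fin N) (Fin N) ℝ) (z : Fin N → ℝ) (i : Fin N) (hi : (i : ℕ) < n) :
    HasFDerivAt (fun w : Fin N → ℝ => -(∑ j, Df i j * w j) + (1 - w i) *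
        ((∑ j, Bf i j * w j) + ∑ p, ∑ q, w p * (Bfi i p q * w q)))
      (-(∑ q, Df i q • (ContinuousLinearMap.proj q : (Fin N → ℝ) →L[ℝ] ℝ)) +
        (((1 - z i) • ((∑ q, Bf i q • (ContinuousLinearMap.proj q : (Fin N → ℝ) →L[ℝ] ℝ)) +
          ∑ p, ∑ q, (z p • (Bfi i p q • (ContinuousLinearMap.proj q : (Fin N → ℝ) →L[ℝ] ℝ)) +
            (Bfi i p q * z q) • (ContinuousLinearMap.proj p : (Fin N → ℝ) →L[ℝ] ℝ)))) +
         ((∑ j, Bf i j * z j) + ∑ p, ∑ q, z p * (Bfi i p q * z q)) •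
           ((0 : (Fin N → ℝ) →L[ℝ] ℝ) - ContinuousLinearMap.proj i))) z := by
  have hDf : HasFDerivAt (fun w : Fin N → ℝ => ∑ q, Df i q * w q)
      (∑ q, Df i q • (ContinuousLinearMap.proj q : (Fin N → ℝ) →L[ℝ] ℝ)) z :=
    HasFDerivAt.fun_sum fun q _ => ((ContinuousLinearMap.proj q : (Fin N → ℝ) →L[ℝ] ℝ).hasFDerivAt).const_mul (Df i q)
  have hB : HasFDerivAt (fun w : Fin N → ℝ => ∑ q, Bf i q * w q)
      (∑ q, Bf i q • (ContinuousLinearMap.proj q : (Fin N → ℝ) →L[ℝ] ℝ)) z :=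
    HasFDerivAt.fun_sum fun q _ => ((ContinuousLinearMap.proj q : (Fin N → ℝ) →L[ℝ] ℝ).hasFDerivAt).const_mul (Bf i q)
  have hH : HasFDerivAt (fun w : Fin N → ℝ => ∑ p, ∑ q, w p * (Bfi i p q * w q))
      (∑ p, ∑ q, (z p • (Bfi i p q • (ContinuousLinearMap.proj q : (Fin N → ℝ) →L[ℝ] ℝ)) +
        (Bfi i p q * z q) • (ContinuousLinearMap.proj p : (Fin N → ℝ) →L[ℝ] ℝ))) z :=
    HasFDerivAt.fun_sum fun p _ => HasFDerivAt.fun_sum fun q _ =>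
      ((ContinuousLinearMap.proj p : (Fin N → ℝ) →L[ℝ] ℝ).hasFDerivAt).mul
        (((ContinuousLinearMap.proj q : (Fin N → ℝ) →L[ℝ] ℝ).hasFDerivAt).const_mul (Bfi i p q))
  have hc : HasFDerivAt (fun w : Fin N → ℝ => 1 - w i)
      ((0 : (Fin N → ℝ) →L[ℝ] ℝ) - ContinuousLinearMap.proj i) z :=
    (hasFDerivAt_const 1 z).sub ((ContinuousLinearMap.proj i : (Fin N → ℝ) →L[ℝ] ℝ).hasFDerivAt)
  exact hDf.neg.add (hc.mul (hB.add hH))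

lemma hasfd2 {N : ℕ} (Df Bf : Matrix (Fin N) (Fin N) ℝ)
    (Bfi : Fin N → Matrix (Fin N) (Fin N) ℝ) (z : Fin N → ℝ) (i : Fin N) :
    HasFDerivAt (fun w : Fin N → ℝ => -(∑ j, Df i j * w j) + (1 - 0) *
        ((∑ j, Bf i j * w j) + ∑ p, ∑ q, w p * (Bfi i p q * w q)))
      (-(∑ q, Df i q • (ContinuousLinearMap.proj q : (Fin N → ℝ) →L[ℝ] ℝ)) +
        ((((1:ℝ) - 0) • ((∑ q, Bf i q • (ContinuousLinearMap.proj q : (Fin N → ℝ) →L[ℝ] ℝ)) +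
          ∑ p, ∑ q, (z p • (Bfi i p q • (ContinuousLinearMap.proj q : (Fin N → ℝ) →L[ℝ] ℝ)) +
            (Bfi i p q * z q) • (ContinuousLinearMap.proj p : (Fin N → ℝ) →L[ℝ] ℝ)))) +
         ((∑ j, Bf i j * z j) + ∑ p, ∑ q, z p * (Bfi i p q * z q)) •
           (0 : (Fin N → ℝ) →L[ℝ] ℝ))) z := by
  have hDf : HasFDerivAt (fun w : Fin N → ℝ => ∑ q, Df i q * w q)
      (∑ q, Df i q • (ContinuousLinearMap.proj q : (Fin N → ℝ) →L[ℝ] ℝ)) z :=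
    HasFDerivAt.fun_sum fun q _ => ((ContinuousLinearMap.proj q : (Fin N → ℝ) →L[ℝ] ℝ).hasFDerivAt).const_mul (Df i q)
  have hB : HasFDerivAt (fun w : Fin N → ℝ => ∑ q, Bf i q * w q)
      (∑ q, Bf i q • (ContinuousLinearMap.proj q : (Fin N → ℝ) →L[ℝ] ℝ)) z :=
    HasFDerivAt.fun_sum fun q _ => ((ContinuousLinearMap.proj q : (Fin N → ℝ) →L[ℝ] ℝ).hasFDerivAt).const_mul (Bf i q)
  have hH : HasFDerivAt (fun w : Fin N → ℝ => ∑ p, ∑ q, w p * (Bfi i p q * w q))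
      (∑ p, ∑ q, (z p • (Bfi i p q • (ContinuousLinearMap.proj q : (Fin N → ℝ) →L[ℝ] ℝ)) +
        (Bfi i p q * z q) • (ContinuousLinearMap.proj p : (Fin N → ℝ) →L[ℝ] ℝ))) z :=
    HasFDerivAt.fun_sum fun p _ => HasFDerivAt.fun_sum fun q _ =>
      ((ContinuousLinearMap.proj p : (Fin N → ℝ) →L[ℝ] ℝ).hasFDerivAt).mul
        (((ContinuousLinearMap.proj q : (Fin N → ℝ) →L[ℝ] ℝ).hasFDerivAt).const_mul (Bfi i p q))
  have hc : HasFDerivAt (fun _ : Fin N → ℝ => (1:ℝ) - 0)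
      (0 : (Fin N → ℝ) →L[ℝ] ℝ) z := hasFDerivAt_const _ z
  exact hDf.neg.add (hc.mul (hB.add hH))

lemma jac_formula (n : ℕ) {N : ℕ} (Df Bf : Matrix (Fin N) (Fin N) ℝ)
    (Bfi : Fin N → Matrix (Fin N) (Fin N) ℝ) (hd : ∀ p q : Fin N, p ≠ q → Df p q = 0)
    (z : Fin N → ℝ) (i j : Fin N) (hij : i ≠ j) :
    jacobian (Gfield n Df Bf Bfi) z i j =
      (1 - (if (i : ℕ) < n then z i else 0)) *
        (Bf i j + ((∑ q, Bfi i j q * z q) + ∑ p, z p * Bfi i p j)) := by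
  have hGeq : Gfield n Df Bf Bfi = fun w p =>
      -(∑ j, Df p j * w j) + (1 - (if (p : ℕ) < n then w p else 0)) *
        ((∑ j, Bf p j * w j) + ∑ a, ∑ q, w a * (Bfi p a q * w q)) := by
    funext w p; exact Gfield_apply n Df Bf Bfi w p
  have hdiff : ∀ p : Fin N, DifferentiableAt ℝ
      (fun w : Fin N → ℝ => -(∑ j, Df p j * w j) + (1 - (if (p : ℕ) < n then w p else 0)) *
        ((∑ j, Bf p j * w j) + ∑ a, ∑ q, w a * (Bfi p a q * w q))) z := by
    intro p
    by_cases hp : (p : ℕ) < n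
    · simp only [if_pos hp]
      exact (hasfd n Df Bf Bfi z p hp).differentiableAt
    · simp only [if_neg hp]
      exact (hasfd2 Df Bf Bfi z p).differentiableAt
  rw [jacobian, Matrix.of_apply, hGeq, fderiv_pi hdiff, ContinuousLinearMap.pi_apply]
  by_cases hi : (i : ℕ) < n
  · simp only [if_pos hi]
    rw [(hasfd n Df Bf Bfi z i hi).fderiv]
    simp only [ContinuousLinearMap.add_apply, ContinuousLinearMap.neg_apply,
      ContinuousLinearMap.smul_apply, ContinuousLinearMap.sub_apply,
      ContinuousLinearMap.zero_apply, ContinuousLinearMap.sum_apply,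
      ContinuousLinearMap.proj_apply, smul_eq_mul, Pi.single_apply]
    simp only [hij, if_false, mul_ite, mul_one, mul_zero, ite_mul, zero_mul,
      Finset.sum_add_distrib, Finset.sum_ite_irrel,
      Finset.sum_ite_eq', Finset.sum_ite_eq,
      Finset.mem_univ, if_true, Finset.sum_const_zero, add_zero, zero_add]
    rw [hd i j hij]
    ring
  · simp only [if_neg hi]
    rw [(hasfd2 Df Bf Bfi z i).fderiv]
    simp only [ContinuousLinearMap.add_apply, ContinuousLinearMap.neg_apply,
      ContinuousLinearMap.smul_apply, ContinuousLinearMap.sub_apply,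
      ContinuousLinearMap.zero_apply, ContinuousLinearMap.sum_apply,
      ContinuousLinearMap.proj_apply, smul_eq_mul, Pi.single_apply]
    simp only [hij, if_false, mul_ite, mul_one, mul_zero, ite_mul, zero_mul,
      Finset.sum_add_distrib, Finset.sum_ite_irrel,
      Finset.sum_ite_eq', Finset.sum_ite_eq,
      Finset.mem_univ, if_true, Finset.sum_const_zero, add_zero, zero_add]
    rw [hd i j hij]
    ring


lemma clean_path {α : Type*} (R : α → α → Prop) :
    ∀ (r : ℕ) (k : ℕ → α), (∀ s, s < r → R (k s) (k (s+1))) → k 0 ≠ k r →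
      ∃ (r' : ℕ) (k' : ℕ → α), k' 0 = k 0 ∧ k' r' = k r ∧
        ∀ s, s < r' → k' s ≠ k' (s+1) ∧ R (k' s) (k' (s+1)) := by
  intro r
  induction r with
  | zero => exact fun k _ hne => absurd rfl hne
  | succ r ih =>
    intro k hR hne
    by_cases h1 : k r = k (r+1)
    · obtain ⟨r', k', h0, hr, hs⟩ := ih k (fun s hs => hR s (by omega)) (by rw [h1]; exact hne)
      exact ⟨r', k', h0, by rw [hr, h1], hs⟩
    · by_cases h0 : k 0 = k r
      · refine ⟨1, fun s => if s = 0 then k 0 else k (r+1), by simp, by simp, ?_⟩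
        intro s hs
        have : s = 0 := by omega
        subst this
        simp only [if_pos rfl, one_ne_zero, if_neg]
        exact ⟨by rw [h0]; exact h1, by rw [h0]; exact hR r (by omega)⟩
      · obtain ⟨r', k', h0', hr', hs'⟩ := ih k (fun s hs => hR s (by omega)) h0
        refine ⟨r' + 1, fun s => if s ≤ r' then k' s else k (r+1), by simp [h0'], by simp, ?_⟩
        intro s hs
        by_cases hsr : s < r'
        · dsimp only
          rw [if_pos (by omega : s ≤ r'), if_pos (by omega : s + 1 ≤ r')]
          exact hs' s hsr
        · have hseq : s = r' := by omega
          dsimp only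
          rw [hseq, if_pos le_rfl, if_neg (Nat.not_succ_le_self r'), hr']
          exact ⟨h1, hR r (by omega)⟩
/-- at every point of `𝐃` the Jacobian of `G` is an irreducible
Metzler matrix. -/
theorem stmt8 (n m : ℕ) (hn : 0 < n)
    (Df Bf : Matrix (Fin (n + m)) (Fin (n + m)) ℝ)
    (Bfi : Fin (n + m) → Matrix (Fin (n + m)) (Fin (n + m)) ℝ)
    (hmod : ModelHyp n Df Bf Bfi) (hirr : Irred Bf) :
    ∀ z ∈ Dint n Df Bf Bfi,
      (∀ i j : Fin (n + m), i ≠ j → 0 ≤ jacobian (Gfield n Df Bf Bfi) z i j) ∧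
      (∀ i j : Fin (n + m), i ≠ j → ∃ (r : ℕ) (k : ℕ → Fin (n + m)),
        k 0 = i ∧ k r = j ∧ ∀ s, s < r →
          k s ≠ k (s + 1) ∧ 0 < jacobian (Gfield n Df Bf Bfi) z (k s) (k (s + 1))) := by
  intro z hz
  -- basic facts
  have hzpos : ∀ p, 0 < z p := fun p => (hz p).1
  have hfac : ∀ i : Fin (n + m), 0 < 1 - (if (i : ℕ) < n then z i else 0) := by
    intro i
    by_cases hi : (i : ℕ) < n
    · have h2 := (hz i).2
      rw [ubound, if_pos hi] at h2
      rw [if_pos hi]; linarith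
    · rw [if_neg hi]; norm_num
  have hSnn : ∀ i j : Fin (n + m),
      0 ≤ (∑ q, Bfi i j q * z q) + ∑ p, z p * Bfi i p j := by
    intro i j
    apply add_nonneg <;> apply Finset.sum_nonneg <;> intro q _
    · exact mul_nonneg (hmod.bfiNonneg i j q) (hzpos q).le
    · exact mul_nonneg (hzpos q).le (hmod.bfiNonneg i q j)
  constructor
  · intro i j hij
    rw [jac_formula n Df Bf Bfi hmod.dDiag z i j hij]
    exact mul_nonneg (hfac i).le (add_nonneg (hmod.bNonneg i j) (hSnn i j))
  · intro i j hij
    obtain ⟨r, k, h0, hr, hstep⟩ := hirr i j hij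
    have hne : k 0 ≠ k r := by rw [h0, hr]; exact hij
    obtain ⟨r', k', h0', hr', hs'⟩ := clean_path (fun a b => 0 < Bf a b) r k hstep hne
    refine ⟨r', k', by rw [h0', h0], by rw [hr', hr], ?_⟩
    intro s hs
    obtain ⟨hneq, hpos⟩ := hs' s hs
    refine ⟨hneq, ?_⟩
    rw [jac_formula n Df Bf Bfi hmod.dDiag z _ _ hneq]
    exact mul_pos (hfac _) (add_pos_of_pos_of_nonneg hpos (hSnn _ _))
end
end
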